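/- arXiv:1203.1336 — 3 statements merged into one kernel-verified Lean document; each statement's English description precedes it below -/
import Mathlib

section
/- Let Δ ≥ 2 be an integer and let G be a finite simple graph with no isolated vertices such that the maximum degree of G equals Δ, the matching number of G equals ⌈Δ/2⌉, and the number of edges of G equals Δ·⌈Δ/2⌉ + ⌊Δ/2⌋. Then for every vertex x of G, the matching number of G \ x equals the matching number of G. -/
/-- The number of edges of a simple graph. -/
noncomputable def edgeCount {V : Type*} (G : SimpleGraph V) : ℕ := G.edgeSet.ncard

/-- The independence number: largest size of a set of pairwise nonadjacent vertices. -/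
noncomputable def indNum {V : Type*} (G : SimpleGraph V) : ℕ :=
  sSup {n | ∃ s : Finset V, (∀ x ∈ s, ∀ y ∈ s, ¬ G.Adj x y) ∧ s.card = n}

/-- A finite set of edges of `G` forming a matching (pairwise vertex-disjoint edges). -/
def IsMatchingFinset {V : Type*} (G : SimpleGraph V) (m : Finset (Sym2 V)) : Prop :=
  ↑m ⊆ G.edgeSet ∧ ∀ e ∈ m, ∀ f ∈ m, e ≠ f → ∀ v : V, ¬(v ∈ e ∧ v ∈ f)

/-- The matching number: largest size of a matching. -/
noncomputable def matNum {V : Type*} (G : SimpleGraph V) : ℕ :=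
  sSup {n | ∃ m : Finset (Sym2 V), IsMatchingFinset G m ∧ m.card = n}

/-- The maximum degree. -/
noncomputable def maxDeg {V : Type*} (G : SimpleGraph V) : ℕ :=
  ⨆ v, (G.neighborSet v).ncard

/-- `Gext α ν`: disjoint union of `K_{2ν+1}` with `α - 1` isolated vertices. -/
def Gext (α ν : ℕ) : SimpleGraph (Fin (2*ν+1) ⊕ Fin (α-1)) :=
  SimpleGraph.fromRel (fun x y => x.isLeft = true ∧ y.isLeft = true)

/-- `Hext α ν`: the complete split graph: clique of size `ν` joined to an
independent set of size `α`. -/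
def Hext (α ν : ℕ) : SimpleGraph (Fin ν ⊕ Fin α) :=
  SimpleGraph.fromRel (fun x _ => x.isLeft = true)

/-- `Fext α Δ`: disjoint union of `α` copies of `K_{Δ+1}`. -/
def Fext (α Δ : ℕ) : SimpleGraph (Fin α × Fin (Δ+1)) :=
  SimpleGraph.fromRel (fun x y => x.1 = y.1)

/-- `Jgraph Δ`: for even `Δ` this is `K_{Δ+1}`; for odd `Δ = 2j-1` it is `K_{2j}`
minus a perfect matching (vertices `2k, 2k+1` are nonadjacent) together with an extra
vertex (the last one) joined to all but one (vertex `0`) of the other vertices. -/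
def Jgraph (Δ : ℕ) : SimpleGraph (Fin (2*((Δ+1)/2)+1)) :=
  SimpleGraph.fromRel (fun x y =>
    if Δ % 2 = 0 then True
    else (x.val < 2*((Δ+1)/2) ∧ y.val < 2*((Δ+1)/2) ∧ x.val/2 ≠ y.val/2) ∨
         (x.val = 2*((Δ+1)/2) ∧ 0 < y.val ∧ y.val < 2*((Δ+1)/2)))

/-- `G` is edge-extremal for `(α, ν)`: it has independence number `α`, matching number `ν`,
and the maximum number of edges among all finite simple graphs with independence number `α`
and matching number `ν`. -/
def EdgeExtremal {V : Type*} [Fintype V] (G : SimpleGraph V) (α ν : ℕ) : Prop :=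
  indNum G = α ∧ matNum G = ν ∧
    ∀ (W : Type) [Fintype W] (H : SimpleGraph W),
      indNum H = α → matNum H = ν → edgeCount H ≤ edgeCount G
section Aux
universe u
variable {V : Type u}

namespace CEaux

/-- `v` is exposed (unmatched) by `m`. -/
def Exp (m : Finset (Sym2 V)) (v : V) : Prop := ∀ e ∈ m, v ∉ e

lemma matching_subset {G : SimpleGraph V} {m m' : Finset (Sym2 V)}
    (hm : IsMatchingFinset G m) (h : m' ⊆ m) : IsMatchingFinset G m' :=
  ⟨Set.Subset.trans (by exact_mod_cast h) hm.1,
   fun e he f hf => hm.2 e (h he) f (h hf)⟩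

lemma matching_unique {G : SimpleGraph V} {m : Finset (Sym2 V)}
    (hm : IsMatchingFinset G m) {e f : Sym2 V} {v : V}
    (he : e ∈ m) (hf : f ∈ m) (hv : v ∈ e) (hv' : v ∈ f) : e = f := by
  by_contra hne
  exact hm.2 e he f hf hne v ⟨hv, hv'⟩

lemma matching_card_le [Fintype V] {G : SimpleGraph V} {m : Finset (Sym2 V)}
    (hm : IsMatchingFinset G m) : m.card ≤ G.edgeSet.toFinite.toFinset.card := by
  apply Finset.card_le_card
  intro e he
  rw [Set.Finite.mem_toFinset]
  exact hm.1 he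

lemma empty_matching (G : SimpleGraph V) : IsMatchingFinset G (∅ : Finset (Sym2 V)) := by
  constructor
  · simp
  · simp

lemma matNum_set_nonempty (G : SimpleGraph V) :
    {n | ∃ m : Finset (Sym2 V), IsMatchingFinset G m ∧ m.card = n}.Nonempty :=
  ⟨0, ∅, empty_matching G, rfl⟩

lemma matNum_bddAbove [Fintype V] (G : SimpleGraph V) :
    BddAbove {n | ∃ m : Finset (Sym2 V), IsMatchingFinset G m ∧ m.card = n} := by
  refine ⟨G.edgeSet.toFinite.toFinset.card, ?_⟩
  rintro n ⟨m, hm, rfl⟩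
  exact matching_card_le hm

lemma le_matNum [Fintype V] {G : SimpleGraph V} {m : Finset (Sym2 V)}
    (hm : IsMatchingFinset G m) : m.card ≤ matNum G :=
  le_csSup (matNum_bddAbove G) ⟨m, hm, rfl⟩

lemma matNum_spec [Fintype V] (G : SimpleGraph V) :
    ∃ m : Finset (Sym2 V), IsMatchingFinset G m ∧ m.card = matNum G :=
  Nat.sSup_mem (matNum_set_nonempty G) (matNum_bddAbove G)

lemma edge_not_diag {G : SimpleGraph V} {m : Finset (Sym2 V)}
    (hm : IsMatchingFinset G m) {e : Sym2 V} (he : e ∈ m) : ¬ e.IsDiag :=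
  G.not_isDiag_of_mem_edgeSet (hm.1 he)

end CEaux
end Aux

namespace CEaux
universe u
variable {V : Type u}

lemma mem_cases {a b v : V} {e : Sym2 V} (h : s(a,b) = e) (hv : v ∈ e) : v = a ∨ v = b := by
  subst h; exact Sym2.mem_iff.mp hv

lemma matching_insert [DecidableEq (Sym2 V)] {G : SimpleGraph V} {M : Finset (Sym2 V)}
    (hM : IsMatchingFinset G M)
    {g : Sym2 V} (hg : g ∈ G.edgeSet) (hfree : ∀ v ∈ g, Exp M v) :
    IsMatchingFinset G (insert g M) := by
  constructor
  · intro e he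
    rcases Finset.mem_insert.mp (Finset.mem_coe.mp he) with rfl | h
    · exact hg
    · exact hM.1 h
  · intro e he f hf hne v hvv
    obtain ⟨hv, hv'⟩ := hvv
    rcases Finset.mem_insert.mp he with he' | he' <;>
      rcases Finset.mem_insert.mp hf with hf' | hf'
    · exact hne (he'.trans hf'.symm)
    · exact hfree v (he' ▸ hv) f hf' hv'
    · exact hfree v (hf' ▸ hv') e he' hv
    · exact hM.2 e he' f hf' hne v ⟨hv, hv'⟩

lemma swap [Fintype V] [DecidableEq (Sym2 V)] {G : SimpleGraph V} :
    ∀ (k : ℕ) (M N : Finset (Sym2 V)), (M \ N).card = k →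
      IsMatchingFinset G M → IsMatchingFinset G N → N.card = matNum G →
      ∀ z : V, Exp N z →
      ∃ (M' : Finset (Sym2 V)) (r : V), IsMatchingFinset G M' ∧ M'.card = M.card ∧
        M' ⊆ M ∪ N ∧ Exp M' z ∧ ∀ y : V, Exp M y → y ≠ r → Exp M' y := by
  intro k
  induction k using Nat.strong_induction_on with
  | _ k IH =>
  intro M N hk hM hN hNmax z hz
  classical
  by_cases hzM : Exp M z
  · exact ⟨M, z, hM, rfl, Finset.subset_union_left, hzM, fun y hy _ => hy⟩
  -- z is covered by M via e₀ = s(z,p)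
  obtain ⟨e₀, he₀M, hze₀⟩ : ∃ e ∈ M, z ∈ e := by
    by_contra hc; push_neg at hc; exact hzM hc
  have hdiag₀ : ¬ e₀.IsDiag := edge_not_diag hM he₀M
  obtain ⟨p, hpe₀, he₀, hpz⟩ : ∃ p, p ∈ e₀ ∧ s(z, p) = e₀ ∧ p ≠ z :=
    ⟨Sym2.Mem.other hze₀, Sym2.other_mem hze₀, Sym2.other_spec hze₀, Sym2.other_ne hdiag₀ hze₀⟩
  -- p must be covered by N, else N ∪ {e₀} is a bigger matching
  have hpN : ¬ Exp N p := by
    intro hpN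
    have hmatch : IsMatchingFinset G (insert e₀ N) := by
      refine matching_insert hN (hM.1 he₀M) ?_
      intro v hv
      rcases mem_cases he₀ hv with rfl | rfl
      · exact hz
      · exact hpN
    have hnot : e₀ ∉ N := fun h => hz e₀ h hze₀
    have := le_matNum hmatch
    rw [Finset.card_insert_of_notMem hnot, hNmax] at this
    omega
  obtain ⟨e₁, he₁N, hpe₁⟩ : ∃ e ∈ N, p ∈ e := by
    by_contra hc; push_neg at hc; exact hpN hc
  have hdiag₁ : ¬ e₁.IsDiag := edge_not_diag hN he₁N
  obtain ⟨q, hqe₁, he₁, hqp⟩ : ∃ q, q ∈ e₁ ∧ s(p, q) = e₁ ∧ q ≠ p :=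
    ⟨Sym2.Mem.other hpe₁, Sym2.other_mem hpe₁, Sym2.other_spec hpe₁, Sym2.other_ne hdiag₁ hpe₁⟩
  have hze₁ : z ∉ e₁ := hz e₁ he₁N
  have hqz : q ≠ z := fun h => hze₁ (h ▸ hqe₁)
  have he₁e₀ : e₁ ≠ e₀ := fun h => hze₁ (h ▸ hze₀)
  have he₁M : e₁ ∉ M := fun h => he₁e₀ (matching_unique hM h he₀M hpe₁ hpe₀)
  have he₀N : e₀ ∉ N := fun h => hz e₀ h hze₀
  by_cases hqM : Exp M q
  · -- immediate swap: M' = insert e₁ (M.erase e₀)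
    have hpfree : ∀ e ∈ M.erase e₀, p ∉ e := by
      intro e he hpe
      obtain ⟨hne, heM⟩ := Finset.mem_erase.mp he
      exact hne (matching_unique hM heM he₀M hpe hpe₀)
    have hmatch : IsMatchingFinset G (insert e₁ (M.erase e₀)) := by
      refine matching_insert (matching_subset hM (Finset.erase_subset _ _)) (hN.1 he₁N) ?_
      intro v hv
      rcases mem_cases he₁ hv with rfl | rfl
      · exact hpfree
      · exact fun e he => hqM e (Finset.mem_of_mem_erase he)
    have he₁Me : e₁ ∉ M.erase e₀ := fun h => he₁M (Finset.mem_of_mem_erase h)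
    have hMpos : 1 ≤ M.card := Finset.card_pos.mpr ⟨e₀, he₀M⟩
    refine ⟨insert e₁ (M.erase e₀), q, hmatch, ?_, ?_, ?_, ?_⟩
    · rw [Finset.card_insert_of_notMem he₁Me, Finset.card_erase_of_mem he₀M]
      omega
    · intro e he
      rcases Finset.mem_insert.mp he with rfl | he
      · exact Finset.mem_union_right _ he₁N
      · exact Finset.mem_union_left _ (Finset.mem_of_mem_erase he)
    · intro e he hze
      rcases Finset.mem_insert.mp he with rfl | he
      · exact hze₁ hze
      · exact (Finset.mem_erase.mp he).1 (matching_unique hM (Finset.mem_of_mem_erase he) he₀M hze hze₀)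
    · intro y hy hyq e he hye
      rcases Finset.mem_insert.mp he with rfl | he
      · rcases mem_cases he₁ hye with rfl | rfl
        · exact hy e₀ he₀M hpe₀
        · exact hyq rfl
      · exact hy e (Finset.mem_of_mem_erase he) hye
  · -- recurse with N₁ = insert e₀ (N.erase e₁), target q
    have hNpos : 1 ≤ N.card := Finset.card_pos.mpr ⟨e₁, he₁N⟩
    have hN₁ : IsMatchingFinset G (insert e₀ (N.erase e₁)) := by
      refine matching_insert (matching_subset hN (Finset.erase_subset _ _)) (hM.1 he₀M) ?_
      intro v hv e he
      obtain ⟨hne, heN⟩ := Finset.mem_erase.mp he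
      rcases mem_cases he₀ hv with rfl | rfl
      · exact hz e heN
      · exact fun hpe => hne (matching_unique hN heN he₁N hpe hpe₁)
    set N₁ := insert e₀ (N.erase e₁) with hN₁def
    have he₀N₁ : e₀ ∈ N₁ := Finset.mem_insert_self _ _
    have hN₁card : N₁.card = matNum G := by
      rw [hN₁def, Finset.card_insert_of_notMem (fun h => he₀N (Finset.mem_of_mem_erase h)),
        Finset.card_erase_of_mem he₁N]
      omega
    have hqN₁ : Exp N₁ q := by
      intro e he hqe
      rcases Finset.mem_insert.mp he with rfl | he
      · rcases mem_cases he₀ hqe with rfl | rfl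
        · exact hqz rfl
        · exact hqp rfl
      · obtain ⟨hne, heN⟩ := Finset.mem_erase.mp he
        exact hne (matching_unique hN heN he₁N hqe hqe₁)
    have hsub : M \ N₁ ⊆ (M \ N).erase e₀ := by
      intro f hf
      obtain ⟨hfM, hfN₁⟩ := Finset.mem_sdiff.mp hf
      have hfe₀ : f ≠ e₀ := fun h => hfN₁ (h ▸ he₀N₁)
      refine Finset.mem_erase.mpr ⟨hfe₀, Finset.mem_sdiff.mpr ⟨hfM, fun hfN => ?_⟩⟩
      have hfe₁ : f ≠ e₁ := fun h => he₁M (h ▸ hfM)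
      exact hfN₁ (Finset.mem_insert_of_mem (Finset.mem_erase.mpr ⟨hfe₁, hfN⟩))
    have he₀MN : e₀ ∈ M \ N := Finset.mem_sdiff.mpr ⟨he₀M, he₀N⟩
    have hklt : (M \ N₁).card < k := by
      have h1 : (M \ N₁).card ≤ ((M \ N).erase e₀).card := Finset.card_le_card hsub
      rw [Finset.card_erase_of_mem he₀MN, hk] at h1
      have : 1 ≤ k := hk ▸ Finset.card_pos.mpr ⟨e₀, he₀MN⟩
      omega
    obtain ⟨M₁, r₁, hM₁, hcard₁, hsub₁, hqM₁, hpres₁⟩ :=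
      IH _ hklt M N₁ rfl hM hN₁ hN₁card q hqN₁
    have hsubMN : M ∪ N₁ ⊆ M ∪ N := by
      intro e he
      rcases Finset.mem_union.mp he with he | he
      · exact Finset.mem_union_left _ he
      · rcases Finset.mem_insert.mp he with rfl | he
        · exact Finset.mem_union_left _ he₀M
        · exact Finset.mem_union_right _ (Finset.mem_of_mem_erase he)
    by_cases hzM₁ : Exp M₁ z
    · exact ⟨M₁, r₁, hM₁, hcard₁, fun e he => hsubMN (hsub₁ he), hzM₁, hpres₁⟩
    -- z covered in M₁, necessarily by e₀
    obtain ⟨f, hfM₁, hzf⟩ : ∃ e ∈ M₁, z ∈ e := by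
      by_contra hc; push_neg at hc; exact hzM₁ hc
    have hfe₀ : f = e₀ := by
      rcases Finset.mem_union.mp (hsub₁ hfM₁) with hfM | hfN₁
      · exact matching_unique hM hfM he₀M hzf hze₀
      · rcases Finset.mem_insert.mp hfN₁ with rfl | hf
        · rfl
        · exact absurd hzf (hz f (Finset.mem_of_mem_erase hf))
    rw [hfe₀] at hfM₁
    -- M' = insert e₁ (M₁.erase e₀)
    have hpfree₁ : ∀ e ∈ M₁.erase e₀, p ∉ e := by
      intro e he hpe
      obtain ⟨hne, heM₁⟩ := Finset.mem_erase.mp he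
      rcases Finset.mem_union.mp (hsub₁ heM₁) with heM | heN₁
      · exact hne (matching_unique hM heM he₀M hpe hpe₀)
      · rcases Finset.mem_insert.mp heN₁ with rfl | hee
        · exact hne rfl
        · obtain ⟨hne₁, heN⟩ := Finset.mem_erase.mp hee
          exact hne₁ (matching_unique hN heN he₁N hpe hpe₁)
    have hmatch : IsMatchingFinset G (insert e₁ (M₁.erase e₀)) := by
      refine matching_insert (matching_subset hM₁ (Finset.erase_subset _ _)) (hN.1 he₁N) ?_
      intro v hv
      rcases mem_cases he₁ hv with rfl | rfl
      · exact hpfree₁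
      · exact fun e he => hqM₁ e (Finset.mem_of_mem_erase he)
    have he₁M₁ : e₁ ∉ M₁.erase e₀ := fun h => hqM₁ e₁ (Finset.mem_of_mem_erase h) hqe₁
    have hM₁pos : 1 ≤ M₁.card := Finset.card_pos.mpr ⟨e₀, hfM₁⟩
    refine ⟨insert e₁ (M₁.erase e₀), r₁, hmatch, ?_, ?_, ?_, ?_⟩
    · rw [Finset.card_insert_of_notMem he₁M₁, Finset.card_erase_of_mem hfM₁]
      omega
    · intro e he
      rcases Finset.mem_insert.mp he with rfl | he
      · exact Finset.mem_union_right _ he₁N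
      · exact hsubMN (hsub₁ (Finset.mem_of_mem_erase he))
    · intro e he hze
      rcases Finset.mem_insert.mp he with rfl | he
      · exact hze₁ hze
      · exact (Finset.mem_erase.mp he).1 (matching_unique hM₁ (Finset.mem_of_mem_erase he) hfM₁ hze hze₀)
    · intro y hy hyr e he hye
      rcases Finset.mem_insert.mp he with rfl | he
      · rcases mem_cases he₁ hye with rfl | rfl
        · exact hy e₀ he₀M hpe₀
        · exact hqM hy
      · exact hpres₁ y hy hyr e (Finset.mem_of_mem_erase he) hye

end CEaux

namespace CEaux
universe u
variable {V : Type u}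

lemma matching_augment_adj [Fintype V] [DecidableEq (Sym2 V)] {G : SimpleGraph V}
    {M : Finset (Sym2 V)} (hM : IsMatchingFinset G M) (hMmax : M.card = matNum G) {u w : V}
    (hadj : G.Adj u w) (hu : Exp M u) (hw : Exp M w) : False := by
  have hmatch : IsMatchingFinset G (insert s(u,w) M) := by
    refine matching_insert hM (by rwa [SimpleGraph.mem_edgeSet]) ?_
    intro v hv
    rcases Sym2.mem_iff.mp hv with rfl | rfl
    · exact hu
    · exact hw
  have hnot : s(u,w) ∉ M := fun h => hu _ h (Sym2.mem_mk_left u w)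
  have := le_matNum hmatch
  rw [Finset.card_insert_of_notMem hnot, hMmax] at this
  omega

lemma gallai [Fintype V] {G : SimpleGraph V}
    (hin : ∀ v : V, ∃ m, IsMatchingFinset G m ∧ m.card = matNum G ∧ Exp m v) :
    ∃ M, IsMatchingFinset G M ∧ M.card = matNum G ∧
      ∀ u w : V, u ≠ w → Exp M u → Exp M w → ¬ G.Reachable u w := by
  classical
  by_contra hcon
  push_neg at hcon
  set D := {d : ℕ | ∃ M u w, IsMatchingFinset G M ∧ M.card = matNum G ∧ u ≠ w ∧
    Exp M u ∧ Exp M w ∧ G.Reachable u w ∧ G.dist u w = d} with hDdef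
  have hDne : D.Nonempty := by
    obtain ⟨M₀, h1, h2⟩ := matNum_spec G
    obtain ⟨u, w, h3, h4, h5, h6⟩ := hcon M₀ h1 h2
    exact ⟨G.dist u w, M₀, u, w, h1, h2, h3, h4, h5, h6, rfl⟩
  obtain ⟨M, u, w, hM, hMmax, huw, hu, hw, hre, hdist⟩ := Nat.sInf_mem hDne
  have hmem : ∀ (M' : Finset (Sym2 V)) (a b : V), IsMatchingFinset G M' → M'.card = matNum G →
      a ≠ b → Exp M' a → Exp M' b → G.Reachable a b → sInf D ≤ G.dist a b := by
    intro M' a b h1 h2 h3 h4 h5 h6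
    exact Nat.sInf_le ⟨M', a, b, h1, h2, h3, h4, h5, h6, rfl⟩
  obtain ⟨pw, hplen⟩ := hre.exists_walk_length_eq_dist
  have hd1 : 1 ≤ G.dist u w := by
    rcases Nat.eq_zero_or_pos (G.dist u w) with h | h
    · exact absurd (SimpleGraph.Walk.eq_of_length_eq_zero (hplen.trans h)) huw
    · exact h
  have hd2 : 2 ≤ G.dist u w := by
    rcases Nat.lt_or_ge (G.dist u w) 2 with h | h
    · have h1 : G.dist u w = 1 := by omega
      exact absurd (SimpleGraph.Walk.adj_of_length_eq_one (hplen.trans h1))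
        (fun hadj => matching_augment_adj hM hMmax hadj hu hw)
    · exact h
  cases pw with
  | nil => exact absurd rfl huw
  | cons hadj q =>
    rename_i z
    rw [SimpleGraph.Walk.length_cons] at hplen
    have huz : u ≠ z := hadj.ne
    have hq : G.dist z w ≤ G.dist u w - 1 := by
      have := SimpleGraph.dist_le q
      omega
    have hzw : z ≠ w := by
      rintro rfl
      have := SimpleGraph.dist_le hadj.toWalk
      simp [SimpleGraph.Adj.toWalk] at this
      omega
    have hduz : G.dist u z ≤ 1 := by
      have := SimpleGraph.dist_le hadj.toWalk
      simpa [SimpleGraph.Adj.toWalk] using this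
    have hzcov : ¬ Exp M z := by
      intro hexp
      have := hmem M u z hM hMmax huz hu hexp hadj.reachable
      omega
    obtain ⟨N, hN, hNmax, hNz⟩ := hin z
    obtain ⟨M', r, hM', hcard', _, hz', hpres⟩ :=
      swap (M \ N).card M N rfl hM hN hNmax z hNz
    have hcard'' : M'.card = matNum G := hcard'.trans hMmax
    by_cases hur : u = r
    · have hwr : w ≠ r := fun h => huw (hur.trans h.symm)
      have hwz : Exp M' w := hpres w hw hwr
      have := hmem M' w z hM' hcard'' hzw.symm  hwz hz'
        (SimpleGraph.Reachable.symm q.reachable)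
      rw [SimpleGraph.dist_comm] at this
      omega
    · have huz' : Exp M' u := hpres u hu hur
      have := hmem M' u z hM' hcard'' huz huz' hz' hadj.reachable
      omega

end CEaux

namespace CEaux
universe u
variable {V : Type u}

lemma counting [Fintype V] {G : SimpleGraph V} {M : Finset (Sym2 V)} {Δ : ℕ}
    (hM : IsMatchingFinset G M)
    (hsep : ∀ u w : V, u ≠ w → Exp M u → Exp M w → ¬ G.Reachable u w)
    (hΔ : 2 * M.card + 1 ≤ Δ) :
    edgeCount G ≤ Δ * M.card := by
  classical
  set E := G.edgeSet.toFinite.toFinset with hEdef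
  have hEcount : edgeCount G = E.card := by
    rw [edgeCount, Set.ncard_eq_toFinset_card]
  have hEedge : ∀ e ∈ E, e ∈ G.edgeSet := fun e he => (Set.Finite.mem_toFinset _).mp he
  have hME : M ⊆ E := fun e he => (Set.Finite.mem_toFinset _).mpr (hM.1 he)
  -- endpoint selection
  have hsel : ∀ e : Sym2 V, ∃ pq : V × V, e = s(pq.1, pq.2) := by
    intro e
    induction e using Sym2.ind with
    | _ a b => exact ⟨(a, b), rfl⟩
  set o : Sym2 V → V × V := fun e => (hsel e).choose with hodef
  have ho : ∀ e : Sym2 V, e = s((o e).1, (o e).2) := fun e => (hsel e).choose_spec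
  set comp : Sym2 V → G.ConnectedComponent := fun e => G.connectedComponentMk (o e).1
    with hcompdef
  have hadjO : ∀ e ∈ G.edgeSet, G.Adj (o e).1 (o e).2 := by
    intro e he
    rw [ho e, SimpleGraph.mem_edgeSet] at he
    exact he
  have key : ∀ e ∈ G.edgeSet, ∀ v ∈ e, G.connectedComponentMk v = comp e := by
    intro e he v hv
    rcases mem_cases (ho e).symm hv with rfl | rfl
    · rfl
    · exact SimpleGraph.ConnectedComponent.sound (hadjO e he).symm.reachable
  set t := E.image comp with htdef
  have hEsum : E.card = ∑ c ∈ t, (E.filter (fun e => comp e = c)).card :=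
    Finset.card_eq_sum_card_fiberwise (fun e he => Finset.mem_image_of_mem comp he)
  have hMsum : M.card = ∑ c ∈ t, (M.filter (fun e => comp e = c)).card :=
    Finset.card_eq_sum_card_fiberwise (fun e he => Finset.mem_image_of_mem comp (hME he))
  have hper : ∀ c ∈ t, (E.filter (fun e => comp e = c)).card ≤
      Δ * (M.filter (fun e => comp e = c)).card := by
    intro c _
    set Mc := M.filter (fun e => comp e = c) with hMcdef
    set Ec := E.filter (fun e => comp e = c) with hEcdef
    set S := Finset.univ.filter (fun v => G.connectedComponentMk v = c) with hSdef
    set m := Mc.card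
    -- covered vertices of S
    set φ : V → Sym2 V := fun v => if h : ∃ e ∈ M, v ∈ e then h.choose else s(v, v) with hφdef
    have hφspec : ∀ v : V, (¬ Exp M v) → φ v ∈ M ∧ v ∈ φ v := by
      intro v hv
      have h : ∃ e ∈ M, v ∈ e := by
        by_contra hc; push_neg at hc; exact hv hc
      rw [hφdef]
      simp only [dif_pos h]
      exact ⟨h.choose_spec.1, h.choose_spec.2⟩
    have hcov : (S.filter (fun v => ¬ Exp M v)).card ≤ 2 * m := by
      refine Finset.card_le_mul_card_image_of_maps_to (f := φ) ?_ 2 ?_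
      · intro v hv
        obtain ⟨hvS, hvc⟩ := Finset.mem_filter.mp hv
        obtain ⟨h1, h2⟩ := hφspec v hvc
        refine Finset.mem_filter.mpr ⟨h1, ?_⟩
        rw [← key (φ v) (hM.1 h1) v h2]
        exact (Finset.mem_filter.mp hvS).2
      · intro e _
        have hsub : (S.filter (fun v => ¬ Exp M v)).filter (fun v => φ v = e) ⊆
            {(o e).1, (o e).2} := by
          intro v hv
          obtain ⟨hv1, hv2⟩ := Finset.mem_filter.mp hv
          have hvc := (Finset.mem_filter.mp hv1).2
          obtain ⟨_, h2⟩ := hφspec v hvc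
          rw [hv2] at h2
          rcases mem_cases (ho e).symm h2 with rfl | rfl
          · exact Finset.mem_insert_self _ _
          · exact Finset.mem_insert_of_mem (Finset.mem_singleton_self _)
        calc ((S.filter (fun v => ¬ Exp M v)).filter (fun v => φ v = e)).card
            ≤ ({(o e).1, (o e).2} : Finset V).card := Finset.card_le_card hsub
          _ ≤ 2 := Finset.card_insert_le _ _ |>.trans (by simp)
    have hexp : (S.filter (fun v => Exp M v)).card ≤ 1 := by
      refine Finset.card_le_one.mpr ?_
      intro u hu w hw
      obtain ⟨huS, hue⟩ := Finset.mem_filter.mp hu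
      obtain ⟨hwS, hwe⟩ := Finset.mem_filter.mp hw
      by_contra hne
      refine hsep u w hne hue hwe ?_
      apply SimpleGraph.ConnectedComponent.exact
      rw [(Finset.mem_filter.mp huS).2, (Finset.mem_filter.mp hwS).2]
    have hScard : S.card ≤ 2 * m + 1 := by
      have := Finset.card_filter_add_card_filter_not
        (s := S) (p := fun v => Exp M v)
      omega
    -- edges of Ec live inside S
    have hends : ∀ e ∈ Ec, (o e).1 ∈ S ∧ (o e).2 ∈ S := by
      intro e he
      obtain ⟨heE, hec⟩ := Finset.mem_filter.mp he
      have heG := hEedge e heE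
      constructor
      · refine Finset.mem_filter.mpr ⟨Finset.mem_univ _, ?_⟩
        have hm1 : (o e).1 ∈ e := by
          have := Sym2.mem_mk_left (o e).1 (o e).2
          rwa [← ho e] at this
        rw [key e heG (o e).1 hm1]
        exact hec
      · refine Finset.mem_filter.mpr ⟨Finset.mem_univ _, ?_⟩
        have hm2 : (o e).2 ∈ e := by
          have := Sym2.mem_mk_right (o e).1 (o e).2
          rwa [← ho e] at this
        rw [key e heG (o e).2 hm2]
        exact hec
    have hdiagE : ∀ e ∈ Ec, (o e).1 ≠ (o e).2 := by
      intro e he h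
      have := G.not_isDiag_of_mem_edgeSet (hEedge e (Finset.mem_filter.mp he).1)
      rw [ho e] at this
      exact this (Sym2.mk_isDiag_iff.mpr h)
    -- double counting into S.offDiag
    have hdouble : 2 * Ec.card ≤ S.offDiag.card := by
      have hinj : Set.InjOn (fun p : Sym2 V × Bool =>
          if p.2 then ((o p.1).1, (o p.1).2) else ((o p.1).2, (o p.1).1))
          (↑(Ec ×ˢ (Finset.univ : Finset Bool)) : Set (Sym2 V × Bool)) := by
        rintro ⟨e, i⟩ hp ⟨f, j⟩ hq hpq
        have hpE : e ∈ Ec := (Finset.mem_product.mp (Finset.mem_coe.mp hp)).1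
        have hqE : f ∈ Ec := (Finset.mem_product.mp (Finset.mem_coe.mp hq)).1
        cases i <;> cases j <;>
          simp only [Bool.false_eq_true, if_false, if_true, Prod.mk.injEq] at hpq <;>
          obtain ⟨hpq1, hpq2⟩ := hpq
        · have hef : e = f := by
            rw [ho e, hpq1, hpq2]; exact (ho f).symm
          rw [hef]
        · exfalso
          have hef : e = f := by
            rw [ho e, hpq1, hpq2, Sym2.eq_swap]; exact (ho f).symm
          subst hef
          exact hdiagE e hpE hpq2
        · exfalso
          have hef : e = f := by
            rw [ho e, hpq1, hpq2, Sym2.eq_swap]; exact (ho f).symm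
          subst hef
          exact hdiagE e hpE hpq1
        · have hef : e = f := by
            rw [ho e, hpq1, hpq2]; exact (ho f).symm
          rw [hef]
      have hmaps : ∀ p ∈ Ec ×ˢ (Finset.univ : Finset Bool),
          (if p.2 then ((o p.1).1, (o p.1).2) else ((o p.1).2, (o p.1).1)) ∈ S.offDiag := by
        intro p hp
        obtain ⟨hpE, _⟩ := Finset.mem_product.mp hp
        obtain ⟨h1, h2⟩ := hends p.1 hpE
        have h3 := hdiagE p.1 hpE
        rcases Bool.eq_false_or_eq_true p.2 with hb | hb <;> simp only [hb, if_true, if_false] <;>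
          exact Finset.mem_offDiag.mpr (by tauto)
      have := Finset.card_le_card_of_injOn _ hmaps hinj
      rwa [Finset.card_product, Finset.card_univ, Fintype.card_bool, mul_comm] at this
    have hoffcard : S.offDiag.card = S.card * S.card - S.card := Finset.offDiag_card _
    have hmle : m ≤ M.card := Finset.card_le_card (Finset.filter_subset _ _)
    have hnn : S.card * S.card - S.card ≤ 2 * (m * Δ) := by
      have h1 : S.card * S.card - S.card = S.card * (S.card - 1) := by
        rw [Nat.mul_sub_one, Nat.mul_comm]
      rw [h1]
      calc S.card * (S.card - 1) ≤ (2 * m + 1) * (2 * m) :=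
            Nat.mul_le_mul hScard (by omega)
        _ = 2 * (m * (2 * m + 1)) := by ring
        _ ≤ 2 * (m * Δ) := by
            have : 2 * m + 1 ≤ Δ := by omega
            exact Nat.mul_le_mul_left 2 (Nat.mul_le_mul_left m this)
    have h2e : 2 * Ec.card ≤ 2 * (m * Δ) := by
      rw [hoffcard] at hdouble
      omega
    have h3 := Nat.le_of_mul_le_mul_left h2e (by norm_num)
    calc Ec.card ≤ m * Δ := h3
      _ = Δ * m := Nat.mul_comm _ _
  calc edgeCount G = E.card := hEcount
    _ = ∑ c ∈ t, (E.filter (fun e => comp e = c)).card := hEsum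
    _ ≤ ∑ c ∈ t, Δ * (M.filter (fun e => comp e = c)).card := Finset.sum_le_sum hper
    _ = Δ * ∑ c ∈ t, (M.filter (fun e => comp e = c)).card := by rw [Finset.mul_sum]
    _ = Δ * M.card := by rw [← hMsum]

end CEaux

namespace CEaux
universe u
variable {V : Type u}

lemma sym2_exists (e : Sym2 V) : ∃ a b, e = s(a, b) := by
  induction e using Sym2.ind with
  | _ a b => exact ⟨a, b, rfl⟩

lemma induce_adj' {G : SimpleGraph V} {s : Set V} {a b : s} (h : (G.induce s).Adj a b) :
    G.Adj a.val b.val := h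

lemma induce_adj'' {G : SimpleGraph V} {s : Set V} {a b : s} (h : G.Adj a.val b.val) :
    (G.induce s).Adj a b := h

lemma matching_up [Fintype V] {G : SimpleGraph V} {s : Set V} {m : Finset (Sym2 s)}
    (hm : IsMatchingFinset (G.induce s) m) :
    ∃ m' : Finset (Sym2 V), IsMatchingFinset G m' ∧ m'.card = m.card ∧
      ∀ e ∈ m', ∀ v ∈ e, v ∈ s := by
  classical
  have hinj : Function.Injective (Sym2.map (Subtype.val : s → V)) :=
    Sym2.map.injective Subtype.val_injective
  refine ⟨m.image (Sym2.map Subtype.val), ⟨?_, ?_⟩, Finset.card_image_of_injective _ hinj, ?_⟩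
  · intro e' he'
    obtain ⟨e, he, rfl⟩ := Finset.mem_image.mp (Finset.mem_coe.mp he')
    have h1 := hm.1 he
    obtain ⟨a, b, rfl⟩ := sym2_exists e
    rw [Sym2.map_pair_eq, SimpleGraph.mem_edgeSet]
    exact induce_adj' ((SimpleGraph.mem_edgeSet _).mp h1)
  · intro e' he' f' hf' hne v hvv
    obtain ⟨hv, hv'⟩ := hvv
    obtain ⟨e, he, rfl⟩ := Finset.mem_image.mp he'
    obtain ⟨f, hf, rfl⟩ := Finset.mem_image.mp hf'
    obtain ⟨v₀, hv₀, hv₀e⟩ := Sym2.mem_map.mp hv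
    obtain ⟨v₁, hv₁, hv₁e⟩ := Sym2.mem_map.mp hv'
    have hv01 : v₀ = v₁ := Subtype.val_injective (hv₀e.trans hv₁e.symm)
    exact hm.2 e he f hf (fun h => hne (by rw [h])) v₀ ⟨hv₀, hv01 ▸ hv₁⟩
  · intro e' he' v hv
    obtain ⟨e, he, rfl⟩ := Finset.mem_image.mp he'
    obtain ⟨v₀, _, hv₀e⟩ := Sym2.mem_map.mp hv
    exact hv₀e ▸ v₀.2

lemma matching_down [Fintype V] {G : SimpleGraph V} {s : Set V} {m : Finset (Sym2 V)}
    (hm : IsMatchingFinset G m) (hs : ∀ e ∈ m, ∀ v ∈ e, v ∈ s) :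
    ∃ m' : Finset (Sym2 s), IsMatchingFinset (G.induce s) m' ∧ m'.card = m.card := by
  classical
  rcases m.eq_empty_or_nonempty with rfl | hne
  · exact ⟨∅, empty_matching _, rfl⟩
  obtain ⟨e₀, he₀⟩ := hne
  obtain ⟨a₀, b₀, he₀ab⟩ := sym2_exists e₀
  have hd : a₀ ∈ s := hs e₀ he₀ a₀ (he₀ab ▸ Sym2.mem_mk_left a₀ b₀)
  set f : V → s := fun v => if h : v ∈ s then ⟨v, h⟩ else ⟨a₀, hd⟩ with hfdef
  have hfval : ∀ v ∈ s, (f v : V) = v := by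
    intro v hv
    rw [hfdef]
    simp [dif_pos hv]
  have hkey : ∀ e ∈ m, Sym2.map (Subtype.val : s → V) (Sym2.map f e) = e := by
    intro e he
    obtain ⟨a, b, rfl⟩ := sym2_exists e
    have ha : a ∈ s := hs _ he a (Sym2.mem_mk_left a b)
    have hb : b ∈ s := hs _ he b (Sym2.mem_mk_right a b)
    rw [Sym2.map_pair_eq, Sym2.map_pair_eq, hfval a ha, hfval b hb]
  have hinj : Set.InjOn (Sym2.map f) m := by
    intro e he e' he' hee
    rw [← hkey e he, ← hkey e' he', hee]
  refine ⟨m.image (Sym2.map f), ⟨?_, ?_⟩, Finset.card_image_of_injOn hinj⟩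
  · intro e' he'
    obtain ⟨e, he, rfl⟩ := Finset.mem_image.mp (Finset.mem_coe.mp he')
    obtain ⟨a, b, rfl⟩ := sym2_exists e
    have ha : a ∈ s := hs _ he a (Sym2.mem_mk_left a b)
    have hb : b ∈ s := hs _ he b (Sym2.mem_mk_right a b)
    rw [Sym2.map_pair_eq, SimpleGraph.mem_edgeSet]
    refine induce_adj'' ?_
    rw [hfval a ha, hfval b hb]
    exact (SimpleGraph.mem_edgeSet _).mp (hm.1 he)
  · intro e' he' f' hf' hnef v hvv
    obtain ⟨hv, hv'⟩ := hvv
    obtain ⟨e, he, rfl⟩ := Finset.mem_image.mp he'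
    obtain ⟨g, hg, rfl⟩ := Finset.mem_image.mp hf'
    obtain ⟨v₀, hv₀, hv₀e⟩ := Sym2.mem_map.mp hv
    obtain ⟨v₁, hv₁, hv₁e⟩ := Sym2.mem_map.mp hv'
    have hv₀s : v₀ ∈ s := hs _ he _ hv₀
    have hv₁s : v₁ ∈ s := hs _ hg _ hv₁
    have hv01 : v₀ = v₁ := by
      have := congrArg (Subtype.val) (hv₀e.trans hv₁e.symm)
      rwa [hfval _ hv₀s, hfval _ hv₁s] at this
    exact hm.2 e he g hg (fun h => hnef (by rw [h])) v₀ ⟨hv₀, hv01 ▸ hv₁⟩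

lemma matNum_induce_le [Fintype V] {G : SimpleGraph V} {s : Set V} :
    matNum (G.induce s) ≤ matNum G := by
  classical
  obtain ⟨m, hm, hcard⟩ := matNum_spec (G.induce s)
  obtain ⟨m', hm', hcard', _⟩ := matching_up hm
  rw [← hcard, ← hcard']
  exact le_matNum hm'

lemma matNum_le_induce_del [Fintype V] {G : SimpleGraph V} (x : V) :
    matNum G ≤ matNum (G.induce {u | u ≠ x}) + 1 := by
  classical
  obtain ⟨m, hm, hcard⟩ := matNum_spec G
  have hmx1 : (m.filter (fun e => x ∈ e)).card ≤ 1 := by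
    refine Finset.card_le_one.mpr ?_
    intro e he f hf
    obtain ⟨he1, he2⟩ := Finset.mem_filter.mp he
    obtain ⟨hf1, hf2⟩ := Finset.mem_filter.mp hf
    exact matching_unique hm he1 hf1 he2 hf2
  have hm₂m : IsMatchingFinset G (m.filter (fun a => x ∉ a)) :=
    matching_subset hm (Finset.filter_subset _ _)
  have hm₂s : ∀ e ∈ m.filter (fun a => x ∉ a), ∀ v ∈ e, v ∈ {u : V | u ≠ x} := by
    intro e he v hv
    intro hvx
    exact (Finset.mem_filter.mp he).2 (hvx ▸ hv)
  obtain ⟨m', hm', hcard'⟩ := matching_down hm₂m hm₂s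
  have h1 := le_matNum hm'
  have h2 : (m.filter (fun e => x ∈ e)).card + (m.filter (fun a => x ∉ a)).card = m.card :=
    Finset.card_filter_add_card_filter_not (s := m) (p := fun e => x ∈ e)
  omega

lemma matNum_induce_isolated [Fintype V] {G : SimpleGraph V} {x : V}
    (h : ∀ u, ¬ G.Adj x u) : matNum (G.induce {u | u ≠ x}) = matNum G := by
  classical
  refine le_antisymm matNum_induce_le ?_
  obtain ⟨m, hm, hcard⟩ := matNum_spec G
  have hs : ∀ e ∈ m, ∀ v ∈ e, v ∈ {u : V | u ≠ x} := by
    intro e he v hv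
    intro hvx
    subst hvx
    have hed := hm.1 he
    have hsp := Sym2.other_spec hv
    rw [← hsp, SimpleGraph.mem_edgeSet] at hed
    exact h _ hed
  obtain ⟨m', hm', hcard'⟩ := matching_down hm hs
  rw [← hcard, ← hcard']
  exact le_matNum hm'

lemma deg_le_maxDeg [Fintype V] {G : SimpleGraph V} (x : V) :
    (G.neighborSet x).ncard ≤ maxDeg G := by
  unfold maxDeg
  exact le_ciSup (f := fun v : V => (G.neighborSet v).ncard)
    (Set.Finite.bddAbove (Set.finite_range _)) x

lemma edgeCount_induce_del [Fintype V] {G : SimpleGraph V} (x : V) :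
    edgeCount (G.induce {u | u ≠ x}) + (G.neighborSet x).ncard = edgeCount G := by
  classical
  set I : Set (Sym2 V) := {e | e ∈ G.edgeSet ∧ x ∈ e} with hIdef
  have hIsub : I ⊆ G.edgeSet := fun e he => he.1
  have h1 : (G.edgeSet \ I).ncard + I.ncard = G.edgeSet.ncard :=
    Set.ncard_diff_add_ncard_of_subset hIsub (Set.toFinite _)
  have h2 : I.ncard = (G.neighborSet x).ncard := by
    have himg : I = (fun y => s(x, y)) '' (G.neighborSet x) := by
      ext e
      constructor
      · rintro ⟨he, hxe⟩
        refine ⟨Sym2.Mem.other hxe, ?_, Sym2.other_spec hxe⟩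
        have := Sym2.other_spec hxe
        rw [← this, SimpleGraph.mem_edgeSet] at he
        exact he
      · rintro ⟨y, hy, rfl⟩
        exact ⟨(SimpleGraph.mem_edgeSet _).mpr hy, Sym2.mem_mk_left _ _⟩
    rw [himg]
    apply Set.ncard_image_of_injOn
    intro y _ y' _ hyy
    exact Sym2.congr_right.mp hyy
  have h3 : (G.induce {u | u ≠ x}).edgeSet.ncard = (G.edgeSet \ I).ncard := by
    have himg : Sym2.map (Subtype.val : {u : V | u ≠ x} → V) '' (G.induce {u | u ≠ x}).edgeSet
        = G.edgeSet \ I := by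
      ext e
      constructor
      · rintro ⟨e', he', rfl⟩
        obtain ⟨a, b, rfl⟩ := sym2_exists e'
        have hadj : G.Adj a.val b.val := induce_adj' ((SimpleGraph.mem_edgeSet _).mp he')
        rw [Sym2.map_pair_eq]
        refine ⟨(SimpleGraph.mem_edgeSet _).mpr hadj, ?_⟩
        intro hmem
        rcases Sym2.mem_iff.mp hmem.2 with h | h
        · exact a.2 h.symm
        · exact b.2 h.symm
      · rintro ⟨he, hni⟩
        obtain ⟨a, b, rfl⟩ := sym2_exists e
        have hxe : x ∉ s(a, b) := fun hc => hni ⟨he, hc⟩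
        have hax : a ≠ x := fun hc => hxe (hc ▸ Sym2.mem_mk_left a b)
        have hbx : b ≠ x := fun hc => hxe (hc ▸ Sym2.mem_mk_right a b)
        refine ⟨s((⟨a, hax⟩ : {u : V | u ≠ x}), ⟨b, hbx⟩), ?_, by rw [Sym2.map_pair_eq]⟩
        exact (SimpleGraph.mem_edgeSet _).mpr (induce_adj'' ((SimpleGraph.mem_edgeSet _).mp he))
    rw [← himg]
    exact (Set.ncard_image_of_injective _ (Sym2.map.injective Subtype.val_injective)).symm
  rw [edgeCount, edgeCount, h3, ← h2]
  exact h1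

lemma maxDeg_induce_le [Fintype V] {G : SimpleGraph V} {s : Set V} :
    maxDeg (G.induce s) ≤ maxDeg G := by
  classical
  unfold maxDeg
  by_cases hne : Nonempty s
  · refine ciSup_le fun v => ?_
    have h1 : ((G.induce s).neighborSet v).ncard ≤ (G.neighborSet v.val).ncard := by
      have himg : (Subtype.val : s → V) '' ((G.induce s).neighborSet v) ⊆
          G.neighborSet v.val := by
        rintro _ ⟨w, hw, rfl⟩
        exact induce_adj' hw
      calc ((G.induce s).neighborSet v).ncard
          = ((Subtype.val : s → V) '' ((G.induce s).neighborSet v)).ncard :=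
            (Set.ncard_image_of_injective _ Subtype.val_injective).symm
        _ ≤ (G.neighborSet v.val).ncard := Set.ncard_le_ncard himg (Set.toFinite _)
    refine h1.trans ?_
    exact le_ciSup (f := fun v : V => (G.neighborSet v).ncard)
      (Set.Finite.bddAbove (Set.finite_range _)) v.val
  · have : IsEmpty s := not_nonempty_iff.mp hne
    rw [ciSup_of_empty]
    exact Nat.zero_le _

end CEaux

namespace CEaux
universe u

lemma boundF : ∀ (n : ℕ) {V : Type u} [Fintype V] (G : SimpleGraph V) (Δ : ℕ),
    edgeCount G = n → maxDeg G ≤ Δ → 2 * matNum G < Δ →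
    edgeCount G ≤ Δ * matNum G := by
  intro n
  induction n using Nat.strong_induction_on with
  | _ n IH =>
  intro V _ G Δ hn hdeg hlt
  classical
  by_cases hess : ∀ v : V, matNum (G.induce {u | u ≠ v}) = matNum G
  · -- every vertex is inessential: use gallai + counting
    have hin : ∀ v : V, ∃ m, IsMatchingFinset G m ∧ m.card = matNum G ∧ Exp m v := by
      intro v
      obtain ⟨m, hm, hcard⟩ := matNum_spec (G.induce {u | u ≠ v})
      obtain ⟨m', hm', hcard', hend⟩ := matching_up hm
      refine ⟨m', hm', by rw [hcard', hcard, hess v], ?_⟩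
      intro e he hv
      exact (hend e he v hv) rfl
    obtain ⟨M, hM, hMmax, hsep⟩ := gallai hin
    have hcount := counting hM hsep (by omega : 2 * M.card + 1 ≤ Δ)
    rw [hMmax] at hcount
    exact hcount
  · push_neg at hess
    obtain ⟨v, hv⟩ := hess
    have hle : matNum (G.induce {u | u ≠ v}) ≤ matNum G := matNum_induce_le
    have hge : matNum G ≤ matNum (G.induce {u | u ≠ v}) + 1 := matNum_le_induce_del v
    have hnu1 : 1 ≤ matNum G := by omega
    have hdx : 1 ≤ (G.neighborSet v).ncard := by
      by_contra h
      have h0 : (G.neighborSet v).ncard = 0 := by omega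
      have hemp : G.neighborSet v = ∅ :=
        (Set.ncard_eq_zero (Set.toFinite _)).mp h0
      refine hv (matNum_induce_isolated ?_)
      intro u hu
      have : u ∈ G.neighborSet v := hu
      rw [hemp] at this
      exact this
    have hEdel := edgeCount_induce_del (G := G) v
    have hIH := IH (edgeCount (G.induce {u | u ≠ v}))
      (by omega) (G.induce {u | u ≠ v}) Δ rfl
      (le_trans maxDeg_induce_le hdeg) (by omega)
    have hmul : Δ * matNum (G.induce {u | u ≠ v}) + Δ ≤ Δ * matNum G := by
      have h1 : matNum (G.induce {u | u ≠ v}) + 1 ≤ matNum G := by omega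
      calc Δ * matNum (G.induce {u | u ≠ v}) + Δ
          = Δ * (matNum (G.induce {u | u ≠ v}) + 1) := by ring
        _ ≤ Δ * matNum G := Nat.mul_le_mul_left Δ h1
    have hdΔ : (G.neighborSet v).ncard ≤ Δ := le_trans (deg_le_maxDeg v) hdeg
    omega

end CEaux


/-- If `Δ ≥ 2`, `G` has no isolated vertices, `Δ(G) = Δ`,
`ν(G) = ⌈Δ/2⌉` and `|E(G)| = Δ⌈Δ/2⌉ + ⌊Δ/2⌋`, then `ν(G \ x) = ν(G)` for every vertex. -/
theorem critical_extremal_matNum_delete (Δ : ℕ) (hΔ : 2 ≤ Δ)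
    {V : Type*} [Fintype V] (G : SimpleGraph V)
    (hiso : ∀ v, ∃ u, G.Adj v u)
    (hdeg : maxDeg G = Δ) (hmat : matNum G = (Δ + 1) / 2)
    (hE : edgeCount G = Δ * ((Δ + 1) / 2) + Δ / 2) :
    ∀ x : V, matNum (G.induce {u | u ≠ x}) = matNum G := by
  intro x
  classical
  have hle : matNum (G.induce {u | u ≠ x}) ≤ matNum G := CEaux.matNum_induce_le
  by_contra hne
  have hlt : matNum (G.induce {u | u ≠ x}) < matNum G := lt_of_le_of_ne hle hne
  have hge : matNum G ≤ matNum (G.induce {u | u ≠ x}) + 1 := CEaux.matNum_le_induce_del x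
  have h2lt : 2 * matNum (G.induce {u | u ≠ x}) < Δ := by omega
  have hF := CEaux.boundF (edgeCount (G.induce {u | u ≠ x})) (G.induce {u | u ≠ x}) Δ rfl
    (le_trans CEaux.maxDeg_induce_le (le_of_eq hdeg)) h2lt
  have hEdel := CEaux.edgeCount_induce_del (G := G) x
  have hdΔ : (G.neighborSet x).ncard ≤ Δ := hdeg ▸ CEaux.deg_le_maxDeg x
  have hmul : Δ * matNum (G.induce {u | u ≠ x}) + Δ ≤ Δ * matNum G := by
    have h1 : matNum (G.induce {u | u ≠ x}) + 1 ≤ matNum G := by omega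
    calc Δ * matNum (G.induce {u | u ≠ x}) + Δ
        = Δ * (matNum (G.induce {u | u ≠ x}) + 1) := by ring
      _ ≤ Δ * matNum G := Nat.mul_le_mul_left Δ h1
  rw [hmat] at hmul
  omega
end

section
/- Let Δ ≥ 2 be an integer and let G be a finite simple graph with no isolated vertices such that the maximum degree of G equals Δ, the matching number of G equals ⌈Δ/2⌉, and the number of edges of G equals Δ·⌈Δ/2⌉ + ⌊Δ/2⌋. Then G is connected. -/
namespace Aux
open SimpleGraph

variable {V : Type*} [DecidableEq V]

/-- The set of vertices covered by a finset of edges. -/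
def mcov (m : Finset (Sym2 V)) : Set V := {v | ∃ e ∈ m, v ∈ e}

lemma mem_mcov {m : Finset (Sym2 V)} {v : V} : v ∈ mcov m ↔ ∃ e ∈ m, v ∈ e := Iff.rfl

lemma mcov_mono {m m' : Finset (Sym2 V)} (h : m ⊆ m') : mcov m ⊆ mcov m' := by
  rintro v ⟨e, he, hv⟩; exact ⟨e, h he, hv⟩

lemma mcov_of_mem {m : Finset (Sym2 V)} {e : Sym2 V} {v : V} (he : e ∈ m) (hv : v ∈ e) :
    v ∈ mcov m := ⟨e, he, hv⟩

lemma match_subset {G : SimpleGraph V} {m m' : Finset (Sym2 V)}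
    (h : IsMatchingFinset G m) (hs : m' ⊆ m) : IsMatchingFinset G m' :=
  ⟨fun e he => h.1 (hs he), fun e he f hf => h.2 e (hs he) f (hs hf)⟩

lemma unique_edge {G : SimpleGraph V} {m : Finset (Sym2 V)}
    (h : IsMatchingFinset G m) {e f : Sym2 V} {v : V} (he : e ∈ m) (hf : f ∈ m)
    (hv : v ∈ e) (hv' : v ∈ f) : e = f := by
  by_contra hne
  exact h.2 e he f hf hne v ⟨hv, hv'⟩

/-- From an edge containing `v`, get the other endpoint. -/
lemma exists_other {G : SimpleGraph V} {e : Sym2 V} {v : V}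
    (he : e ∈ G.edgeSet) (hv : v ∈ e) : ∃ w, G.Adj v w ∧ e = s(v, w) := by
  induction e with
  | _ a b =>
    rw [Sym2.mem_iff] at hv
    rcases hv with rfl | rfl
    · exact ⟨b, he, rfl⟩
    · exact ⟨a, ((SimpleGraph.mem_edgeSet G).mp he).symm, Sym2.eq_swap⟩


lemma mcov_insert {e : Sym2 V} {m : Finset (Sym2 V)} :
    mcov (insert e m) = {v | v ∈ e} ∪ mcov m := by
  ext v
  simp [mcov, Finset.mem_insert, or_and_right, exists_or]

lemma match_insert {G : SimpleGraph V} {m : Finset (Sym2 V)} {e : Sym2 V}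
    (hm : IsMatchingFinset G m) (he : e ∈ G.edgeSet)
    (hdisj : ∀ v, v ∈ e → v ∉ mcov m) : IsMatchingFinset G (insert e m) := by
  constructor
  · intro f hf
    rcases Finset.mem_insert.mp (by exact_mod_cast hf) with rfl | hf'
    · exact he
    · exact hm.1 hf'
  · intro f hf g hg hne v hv
    rcases Finset.mem_insert.mp hf with rfl | hf' <;>
      rcases Finset.mem_insert.mp hg with rfl | hg'
    · exact hne rfl
    · exact hdisj v hv.1 (mcov_of_mem hg' hv.2)
    · exact hdisj v hv.2 (mcov_of_mem hf' hv.1)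
    · exact hm.2 f hf' g hg' hne v hv

lemma not_mem_mcov_erase {G : SimpleGraph V} {m : Finset (Sym2 V)} {e : Sym2 V} {v : V}
    (hm : IsMatchingFinset G m) (he : e ∈ m) (hv : v ∈ e) : v ∉ mcov (m.erase e) := by
  rintro ⟨f, hf, hvf⟩
  have hne := Finset.ne_of_mem_erase hf
  exact hne (unique_edge hm (Finset.mem_of_mem_erase hf) he hvf hv)

lemma mcov_erase_subset {m : Finset (Sym2 V)} {e : Sym2 V} :
    mcov (m.erase e) ⊆ mcov m := mcov_mono (Finset.erase_subset _ _)

/-- The key exchange lemma. -/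
lemma lemF {G : SimpleGraph V} (n : ℕ) :
    ∀ (M M' : Finset (Sym2 V)), M'.card ≤ n →
    IsMatchingFinset G M → IsMatchingFinset G M' →
    ∀ u : V, u ∉ mcov M → u ∈ mcov M' →
    (∃ N, IsMatchingFinset G N ∧ N.card = M.card + 1 ∧ mcov N ⊆ mcov M ∪ mcov M') ∨
    (∃ z y : V, s(y, z) ∈ M ∧ y ∈ mcov M' ∧ z ∉ mcov M' ∧
      (∃ Na, IsMatchingFinset G Na ∧ Na.card = M.card ∧
        mcov Na ⊆ (mcov M ∪ {u}) \ {z}) ∧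
      (∃ Nb, IsMatchingFinset G Nb ∧ Nb.card = M'.card ∧
        mcov Nb ⊆ (mcov M' ∪ {z}) \ {u})) := by
  induction n with
  | zero =>
    intro M M' hn hM hM' u hu hu'
    obtain ⟨e, he, -⟩ := hu'
    rw [Nat.le_zero, Finset.card_eq_zero] at hn
    subst hn
    simp at he
  | succ n ih =>
    intro M M' hn hM hM' u hu hu'
    obtain ⟨e₁, he₁M', hue₁⟩ := hu'
    obtain ⟨x₁, hadj₁, rfl⟩ := exists_other (hM'.1 he₁M') hue₁
    have hux₁ : u ≠ x₁ := hadj₁.ne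
    have hx₁M' : x₁ ∈ mcov M' := mcov_of_mem he₁M' (Sym2.mem_mk_right _ _)
    have he₁M : s(u, x₁) ∉ M := fun h => hu (mcov_of_mem h (Sym2.mem_mk_left _ _))
    by_cases hx₁ : x₁ ∈ mcov M
    · -- x₁ is covered by M, via e₂ = s(x₁, x₂)
      obtain ⟨e₂, he₂, hx₁e₂⟩ := hx₁
      obtain ⟨x₂, hadj₂, rfl⟩ := exists_other (hM.1 he₂) hx₁e₂
      have hx₁x₂ : x₁ ≠ x₂ := hadj₂.ne
      have hx₁M : x₁ ∈ mcov M := mcov_of_mem he₂ (Sym2.mem_mk_left _ _)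
      have hx₂M : x₂ ∈ mcov M := mcov_of_mem he₂ (Sym2.mem_mk_right _ _)
      have hux₂ : u ≠ x₂ := fun h => hu (h ▸ hx₂M)
      have he₁ne₂ : s(u, x₁) ≠ s(x₁, x₂) := by
        intro h
        have huh : u ∈ s(x₁, x₂) := h ▸ Sym2.mem_mk_left u x₁
        rw [Sym2.mem_iff] at huh
        rcases huh with h' | h'
        · exact hux₁ h'
        · exact hux₂ h'
      have he₂M' : s(x₁, x₂) ∉ M' := by
        intro h
        exact he₁ne₂ (unique_edge hM' he₁M' h (Sym2.mem_mk_right _ _) (Sym2.mem_mk_left _ _))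
      set Na : Finset (Sym2 V) := insert s(u, x₁) (M.erase s(x₁, x₂)) with hNadef
      have hNa : IsMatchingFinset G Na := by
        apply match_insert (match_subset hM (Finset.erase_subset _ _)) (hM'.1 he₁M')
        intro v hv hvm
        rw [Sym2.mem_iff] at hv
        rcases hv with rfl | rfl
        · exact hu (mcov_erase_subset hvm)
        · exact not_mem_mcov_erase hM he₂ (Sym2.mem_mk_left _ _) hvm
      have he₁nerase : s(u, x₁) ∉ M.erase s(x₁, x₂) :=
        fun h => he₁M (Finset.mem_of_mem_erase h)
      have hNacard : Na.card = M.card := by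
        rw [hNadef, Finset.card_insert_of_notMem he₁nerase, Finset.card_erase_of_mem he₂]
        have : 1 ≤ M.card := Finset.card_pos.mpr ⟨_, he₂⟩
        omega
      have hNacov : mcov Na ⊆ (mcov M ∪ {u}) \ {x₂} := by
        rw [hNadef, mcov_insert]
        rintro v (hv | hv)
        · rw [Set.mem_setOf_eq, Sym2.mem_iff] at hv
          rcases hv with rfl | rfl
          · exact ⟨Or.inr rfl, hux₂⟩
          · exact ⟨Or.inl hx₁M, hx₁x₂⟩
        · exact ⟨Or.inl (mcov_erase_subset hv),
            fun h => not_mem_mcov_erase hM he₂ (Sym2.mem_mk_right _ _) (h ▸ hv)⟩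
      have hx₂Na : x₂ ∉ mcov Na := fun h => (hNacov h).2 rfl
      by_cases hx₂ : x₂ ∈ mcov M'
      · -- recursive case
        obtain ⟨f, hfM', hx₂f⟩ := hx₂
        have hfne₁ : f ≠ s(u, x₁) := by
          intro h
          rw [h, Sym2.mem_iff] at hx₂f
          rcases hx₂f with h' | h'
          · exact hux₂ h'.symm
          · exact hx₁x₂ h'.symm
        set M'' : Finset (Sym2 V) := M'.erase s(u, x₁) with hM''def
        have hM''m : IsMatchingFinset G M'' := match_subset hM' (Finset.erase_subset _ _)
        have hM''card : M''.card ≤ n := by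
          rw [hM''def, Finset.card_erase_of_mem he₁M']
          omega
        have hx₂M'' : x₂ ∈ mcov M'' :=
          ⟨f, Finset.mem_erase.mpr ⟨hfne₁, hfM'⟩, hx₂f⟩
        have huM'' : u ∉ mcov M'' := not_mem_mcov_erase hM' he₁M' (Sym2.mem_mk_left _ _)
        have hx₁M'' : x₁ ∉ mcov M'' := not_mem_mcov_erase hM' he₁M' (Sym2.mem_mk_right _ _)
        have hmcovM'' : mcov M'' ⊆ mcov M' := mcov_erase_subset
        rcases ih Na M'' hM''card hNa hM''m x₂ hx₂Na hx₂M'' with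
          ⟨N, hN, hNcard, hNcov⟩ | ⟨z, y, hyzNa, hyM'', hzM'', ⟨Na', hNa', hNa'card, hNa'cov⟩,
            ⟨Nb', hNb', hNb'card, hNb'cov⟩⟩
        · -- augmenting propagates
          left
          refine ⟨N, hN, by rw [hNcard, hNacard], ?_⟩
          intro v hv
          rcases hNcov hv with h | h
          · rcases (hNacov h).1 with h' | h'
            · exact Or.inl h'
            · exact Or.inr (h' ▸ mcov_of_mem he₁M' (Sym2.mem_mk_left _ _))
          · exact Or.inr (hmcovM'' h)
        · -- outcome 2 propagates
          have hzmNa : z ∈ mcov Na := mcov_of_mem hyzNa (Sym2.mem_mk_right _ _)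
          have hyzne₁ : s(y, z) ≠ s(u, x₁) := by
            intro h'
            have hym : y ∈ s(u, x₁) := h' ▸ Sym2.mem_mk_left y z
            rw [Sym2.mem_iff] at hym
            rcases hym with rfl | rfl
            · exact huM'' hyM''
            · exact hx₁M'' hyM''
          have hyzMerase : s(y, z) ∈ M.erase s(x₁, x₂) := by
            rcases Finset.mem_insert.mp hyzNa with h' | h'
            · exact absurd h' hyzne₁
            · exact h'
          have hyzM : s(y, z) ∈ M := Finset.mem_of_mem_erase hyzMerase
          have hzM : z ∈ mcov M := mcov_of_mem hyzM (Sym2.mem_mk_right _ _)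
          have hzu : z ≠ u := fun h => hu (h ▸ hzM)
          have hzx₁ : z ≠ x₁ := by
            intro h
            subst h
            exact not_mem_mcov_erase hM he₂ (Sym2.mem_mk_left _ _)
              (mcov_of_mem hyzMerase (Sym2.mem_mk_right _ _))
          have hzM' : z ∉ mcov M' := by
            rintro ⟨g, hg, hzg⟩
            have hgne : g ≠ s(u, x₁) := by
              intro h
              rw [h, Sym2.mem_iff] at hzg
              rcases hzg with h' | h'
              · exact hzu h'
              · exact hzx₁ h'
            exact hzM'' ⟨g, Finset.mem_erase.mpr ⟨hgne, hg⟩, hzg⟩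
          right
          refine ⟨z, y, hyzM, hmcovM'' hyM'', hzM', ?_, ?_⟩
          · refine ⟨Na', hNa', by rw [hNa'card, hNacard], ?_⟩
            intro v hv
            obtain ⟨hv1, hv2⟩ := hNa'cov hv
            refine ⟨?_, hv2⟩
            rcases hv1 with h | rfl
            · exact (hNacov h).1
            · exact Or.inl hx₂M
          · -- Nb := insert s(x₁,x₂) Nb'
            have hx₂Nb' : x₂ ∉ mcov Nb' := fun h => (hNb'cov h).2 rfl
            have hx₁Nb' : x₁ ∉ mcov Nb' := by
              intro h
              rcases (hNb'cov h).1 with h' | h'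
              · exact hx₁M'' h'
              · exact hzx₁ h'.symm
            have he₂Nb' : s(x₁, x₂) ∉ Nb' :=
              fun h => hx₂Nb' (mcov_of_mem h (Sym2.mem_mk_right _ _))
            refine ⟨insert s(x₁, x₂) Nb', ?_, ?_, ?_⟩
            · apply match_insert hNb' (hM.1 he₂)
              intro v hv hvm
              rw [Sym2.mem_iff] at hv
              rcases hv with rfl | rfl
              · exact hx₁Nb' hvm
              · exact hx₂Nb' hvm
            · rw [Finset.card_insert_of_notMem he₂Nb', hNb'card, hM''def,
                Finset.card_erase_of_mem he₁M']
              have : 1 ≤ M'.card := Finset.card_pos.mpr ⟨_, he₁M'⟩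
              omega
            · rw [mcov_insert]
              rintro v (hv | hv)
              · rw [Set.mem_setOf_eq, Sym2.mem_iff] at hv
                rcases hv with rfl | rfl
                · exact ⟨Or.inl hx₁M', fun h => hux₁ h.symm⟩
                · exact ⟨Or.inl ⟨f, hfM', hx₂f⟩, fun h => hux₂ h.symm⟩
              · obtain ⟨hv1, hv2⟩ := hNb'cov hv
                constructor
                · rcases hv1 with h | rfl
                  · exact Or.inl (hmcovM'' h)
                  · exact Or.inr rfl
                · rcases hv1 with h | rfl
                  · exact fun h' => huM'' (h' ▸ h)
                  · exact fun h' => hzu h'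
      · -- base Sub A : x₂ not covered by M'
        right
        refine ⟨x₂, x₁, he₂, hx₁M', hx₂, ⟨Na, hNa, hNacard, hNacov⟩, ?_⟩
        have he₂nerase : s(x₁, x₂) ∉ M'.erase s(u, x₁) :=
          fun h => he₂M' (Finset.mem_of_mem_erase h)
        refine ⟨insert s(x₁, x₂) (M'.erase s(u, x₁)), ?_, ?_, ?_⟩
        · apply match_insert (match_subset hM' (Finset.erase_subset _ _)) (hM.1 he₂)
          intro v hv hvm
          rw [Sym2.mem_iff] at hv
          rcases hv with rfl | rfl
          · exact not_mem_mcov_erase hM' he₁M' (Sym2.mem_mk_right _ _) hvm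
          · exact hx₂ (mcov_erase_subset hvm)
        · rw [Finset.card_insert_of_notMem he₂nerase, Finset.card_erase_of_mem he₁M']
          have : 1 ≤ M'.card := Finset.card_pos.mpr ⟨_, he₁M'⟩
          omega
        · rw [mcov_insert]
          rintro v (hv | hv)
          · rw [Set.mem_setOf_eq, Sym2.mem_iff] at hv
            rcases hv with rfl | rfl
            · exact ⟨Or.inl hx₁M', fun h => hux₁ h.symm⟩
            · exact ⟨Or.inr rfl, fun h => hux₂ h.symm⟩
          · exact ⟨Or.inl (mcov_erase_subset hv),
              fun h => not_mem_mcov_erase hM' he₁M' (Sym2.mem_mk_left _ _) (h ▸ hv)⟩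
    · -- x₁ not covered by M : augment
      left
      refine ⟨insert s(u, x₁) M, ?_, Finset.card_insert_of_notMem he₁M, ?_⟩
      · apply match_insert hM (hM'.1 he₁M')
        intro v hv hvm
        rw [Sym2.mem_iff] at hv
        rcases hv with rfl | rfl
        · exact hu hvm
        · exact hx₁ hvm
      · rw [mcov_insert]
        rintro v (hv | hv)
        · rw [Set.mem_setOf_eq, Sym2.mem_iff] at hv
          rcases hv with rfl | rfl
          · exact Or.inr (mcov_of_mem he₁M' (Sym2.mem_mk_left _ _))
          · exact Or.inr hx₁M'
        · exact Or.inl hv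

variable [Fintype V] {G : SimpleGraph V}

lemma matchSet_bddAbove (G : SimpleGraph V) :
    BddAbove {n | ∃ m : Finset (Sym2 V), IsMatchingFinset G m ∧ m.card = n} := by
  classical
  refine ⟨Fintype.card (Sym2 V), ?_⟩
  rintro n ⟨m, _, rfl⟩
  exact Finset.card_le_univ m

lemma card_le_matNum {m : Finset (Sym2 V)} (h : IsMatchingFinset G m) :
    m.card ≤ matNum G :=
  le_csSup (matchSet_bddAbove G) ⟨m, h, rfl⟩

lemma exists_max_matching (G : SimpleGraph V) :
    ∃ m : Finset (Sym2 V), IsMatchingFinset G m ∧ m.card = matNum G := by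
  have hne : {n | ∃ m : Finset (Sym2 V), IsMatchingFinset G m ∧ m.card = n}.Nonempty :=
    ⟨0, ∅, ⟨by simp, by simp⟩, by simp⟩
  have := Nat.sSup_mem hne (matchSet_bddAbove G)
  exact this

lemma edgeCount_eq_card_edgeFinset (G : SimpleGraph V) [Fintype G.edgeSet] :
    edgeCount G = G.edgeFinset.card := by
  rw [edgeCount, Set.ncard_eq_toFinset_card', SimpleGraph.edgeFinset]

lemma mcov_ncard {G : SimpleGraph V} [Fintype V] (m : Finset (Sym2 V)) :
    IsMatchingFinset G m → (mcov m).ncard = 2 * m.card := by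
  induction m using Finset.induction_on with
  | empty => intro _; simp [mcov]
  | @insert e m hem ih =>
    revert hem
    induction e with
    | _ a b =>
      intro hem hm
      have hmm : IsMatchingFinset G m := match_subset hm (Finset.subset_insert _ _)
      have heE : s(a, b) ∈ G.edgeSet := hm.1 (by exact_mod_cast Finset.mem_insert_self _ _)
      have hab : a ≠ b := (SimpleGraph.mem_edgeSet G).mp heE |>.ne
      have hset : {v | v ∈ s(a, b)} = ({a, b} : Set V) := by
        ext v; simp [Sym2.mem_iff]
      have hdisj : Disjoint ({a, b} : Set V) (mcov m) := by
        rw [Set.disjoint_left]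
        rintro x (rfl | rfl) ⟨f, hf, hxf⟩
        · exact hem (unique_edge hm (Finset.mem_insert_self _ _)
            (Finset.mem_insert_of_mem hf) (Sym2.mem_mk_left _ _) hxf ▸ hf)
        · exact hem (unique_edge hm (Finset.mem_insert_self _ _)
            (Finset.mem_insert_of_mem hf) (Sym2.mem_mk_right _ _) hxf ▸ hf)
      rw [mcov_insert, hset, Set.ncard_union_eq hdisj (Set.toFinite _) (Set.toFinite _),
        Set.ncard_pair hab, ih hmm, Finset.card_insert_of_notMem hem]
      ring

/-- Restriction of a graph to the vertices of a set `A` (on the same vertex type). -/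
def restr (G : SimpleGraph V) (A : Set V) : SimpleGraph V where
  Adj x y := G.Adj x y ∧ x ∈ A ∧ y ∈ A
  symm := ⟨fun x y ⟨h, ha, hb⟩ => ⟨h.symm, hb, ha⟩⟩
  loopless := ⟨fun x ⟨h, _, _⟩ => G.loopless.irrefl x h⟩

lemma restr_adj {G : SimpleGraph V} {A : Set V} {x y : V} :
    (restr G A).Adj x y ↔ G.Adj x y ∧ x ∈ A ∧ y ∈ A := Iff.rfl

lemma restr_edgeSet_subset (G : SimpleGraph V) (A : Set V) :
    (restr G A).edgeSet ⊆ G.edgeSet := by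
  intro e
  induction e with
  | _ a b => exact fun h => h.1

lemma restr_matching {G : SimpleGraph V} {A : Set V} {m : Finset (Sym2 V)}
    (hm : IsMatchingFinset (restr G A) m) : IsMatchingFinset G m :=
  ⟨fun e he => restr_edgeSet_subset G A (hm.1 he), hm.2⟩

lemma matNum_restr_le (G : SimpleGraph V) [Fintype V] (A : Set V) :
    matNum (restr G A) ≤ matNum G := by
  obtain ⟨m, hm, hcard⟩ := exists_max_matching (restr G A)
  rw [← hcard]
  exact card_le_matNum (restr_matching hm)

lemma restr_deg_le (G : SimpleGraph V) [Fintype V] (A : Set V) (v : V) :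
    ((restr G A).neighborSet v).ncard ≤ (G.neighborSet v).ncard :=
  Set.ncard_le_ncard (fun _ h => h.1) (Set.toFinite _)

lemma one_le_matNum {G : SimpleGraph V} [Fintype V] {e : Sym2 V} (he : e ∈ G.edgeSet) :
    1 ≤ matNum G := by
  have : IsMatchingFinset G {e} := by
    constructor
    · intro f hf
      rw [Finset.coe_singleton, Set.mem_singleton_iff] at hf
      exact hf ▸ he
    · intro f hf g hg hne
      rw [Finset.mem_singleton] at hf hg
      exact absurd (hf.trans hg.symm) hne
  calc 1 = ({e} : Finset (Sym2 V)).card := (Finset.card_singleton e).symm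
  _ ≤ matNum G := card_le_matNum this

lemma edgeSet_split {G : SimpleGraph V} {A : Set V}
    (hA : ∀ x y, G.Adj x y → (x ∈ A ↔ y ∈ A)) :
    G.edgeSet = (restr G A).edgeSet ∪ (restr G Aᶜ).edgeSet := by
  ext e
  induction e with
  | _ a b =>
    constructor
    · intro h
      by_cases ha : a ∈ A
      · exact Or.inl ⟨h, ha, (hA a b h).mp ha⟩
      · exact Or.inr ⟨h, ha, fun hb => ha ((hA a b h).mpr hb)⟩
    · rintro (⟨h, -, -⟩ | ⟨h, -, -⟩) <;> exact h

lemma edgeSet_split_disj (G : SimpleGraph V) (A : Set V) :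
    Disjoint (restr G A).edgeSet (restr G Aᶜ).edgeSet := by
  rw [Set.disjoint_left]
  intro e
  induction e with
  | _ a b => exact fun h h' => h'.2.1 h.2.1

lemma edgeCount_split {G : SimpleGraph V} [Fintype V] {A : Set V}
    (hA : ∀ x y, G.Adj x y → (x ∈ A ↔ y ∈ A)) :
    edgeCount G = edgeCount (restr G A) + edgeCount (restr G Aᶜ) := by
  rw [edgeCount, edgeSet_split hA,
    Set.ncard_union_eq (edgeSet_split_disj G A) (Set.toFinite _) (Set.toFinite _)]
  rfl

lemma matNum_split_le {G : SimpleGraph V} [Fintype V] {A : Set V}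
    (hA : ∀ x y, G.Adj x y → (x ∈ A ↔ y ∈ A)) :
    matNum G ≤ matNum (restr G A) + matNum (restr G Aᶜ) := by
  classical
  obtain ⟨M, hM, hcard⟩ := exists_max_matching G
  set MA := M.filter (fun e => e ∈ (restr G A).edgeSet) with hMA
  set MB := M.filter (fun e => ¬ e ∈ (restr G A).edgeSet) with hMB
  have hBedge : ∀ e ∈ MB, e ∈ (restr G Aᶜ).edgeSet := by
    intro e he
    rw [hMB, Finset.mem_filter] at he
    obtain ⟨heM, hnot⟩ := he
    have heE := hM.1 heM
    revert heE hnot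
    induction e with
    | _ a b =>
      intro hnot heE
      by_cases ha : a ∈ A
      · exact absurd ⟨heE, ha, (hA a b heE).mp ha⟩ hnot
      · exact ⟨heE, ha, fun hb => ha ((hA a b heE).mpr hb)⟩
  have hMAm : IsMatchingFinset (restr G A) MA := by
    constructor
    · intro e he
      rw [Finset.mem_coe, hMA, Finset.mem_filter] at he
      exact he.2
    · intro e he f hf
      rw [hMA, Finset.mem_filter] at he hf
      exact hM.2 e he.1 f hf.1
  have hMBm : IsMatchingFinset (restr G Aᶜ) MB := by
    constructor
    · intro e he
      rw [Finset.mem_coe] at he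
      exact hBedge e he
    · intro e he f hf
      rw [hMB, Finset.mem_filter] at he hf
      exact hM.2 e he.1 f hf.1
  have hsum : MA.card + MB.card = M.card := Finset.card_filter_add_card_filter_not _
  calc matNum G = MA.card + MB.card := by rw [hsum, hcard]
  _ ≤ matNum (restr G A) + matNum (restr G Aᶜ) :=
      Nat.add_le_add (card_le_matNum hMAm) (card_le_matNum hMBm)

lemma edgeSet_delete_vertex (G : SimpleGraph V) (v : V) :
    G.edgeSet = (restr G {v}ᶜ).edgeSet ∪ G.incidenceSet v := by
  ext e
  induction e with
  | _ a b =>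
    constructor
    · intro h
      by_cases hv : v = a ∨ v = b
      · exact Or.inr ⟨h, Sym2.mem_iff.mpr hv⟩
      · push_neg at hv
        exact Or.inl ⟨h, fun h' => hv.1 h'.symm, fun h' => hv.2 h'.symm⟩
    · rintro (⟨h, -, -⟩ | ⟨h, -⟩) <;> exact h

lemma edgeCount_delete_vertex (G : SimpleGraph V) [Fintype V] (v : V) :
    edgeCount G = edgeCount (restr G {v}ᶜ) + (G.neighborSet v).ncard := by
  have hdisj : Disjoint (restr G {v}ᶜ).edgeSet (G.incidenceSet v) := by
    rw [Set.disjoint_left]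
    intro e
    induction e with
    | _ a b =>
      rintro ⟨-, ha, hb⟩ ⟨-, hv⟩
      rw [Sym2.mem_iff] at hv
      rcases hv with rfl | rfl
      · exact ha rfl
      · exact hb rfl
  have hcard : (G.incidenceSet v).ncard = (G.neighborSet v).ncard := by
    rw [← Nat.card_coe_set_eq, ← Nat.card_coe_set_eq]
    exact Nat.card_congr (G.incidenceSetEquivNeighborSet v)
  rw [edgeCount, edgeSet_delete_vertex G v,
    Set.ncard_union_eq hdisj (Set.toFinite _) (Set.toFinite _), hcard]
  rfl

lemma exists_matching_avoid {G : SimpleGraph V} [Fintype V] {v : V}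
    (h : matNum G ≤ matNum (restr G {v}ᶜ)) :
    ∃ m, IsMatchingFinset G m ∧ m.card = matNum G ∧ v ∉ mcov m := by
  obtain ⟨m, hm, hcard⟩ := exists_max_matching (restr G {v}ᶜ)
  have hle : matNum (restr G {v}ᶜ) = matNum G :=
    le_antisymm (matNum_restr_le G _) h
  refine ⟨m, restr_matching hm, by rw [hcard, hle], ?_⟩
  rintro ⟨e, he, hv⟩
  have := hm.1 he
  revert this hv
  induction e with
  | _ a b =>
    intro hv hE
    rw [Sym2.mem_iff] at hv
    rcases hv with rfl | rfl
    · exact hE.2.1 rfl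
    · exact hE.2.2 rfl

lemma support_ncard_le (G : SimpleGraph V) [Fintype V]
    (hconn : ∀ u ∈ G.support, ∀ v ∈ G.support, G.Reachable u v)
    (hiness : ∀ v : V, ∃ m, IsMatchingFinset G m ∧ m.card = matNum G ∧ v ∉ mcov m) :
    G.support.ncard ≤ 2 * matNum G + 1 := by
  by_contra hbig
  push_neg at hbig
  set t := matNum G with ht
  have noaug : ∀ (m : Finset (Sym2 V)), IsMatchingFinset G m → m.card = t →
      ∀ a b : V, G.Adj a b → a ∉ mcov m → b ∉ mcov m → False := by
    intro m hm hcard a b hab ha hb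
    have hnotmem : s(a, b) ∉ m := fun h => ha (mcov_of_mem h (Sym2.mem_mk_left _ _))
    have hins : IsMatchingFinset G (insert s(a, b) m) := by
      apply match_insert hm ((SimpleGraph.mem_edgeSet G).mpr hab)
      intro x hx hxm
      rw [Sym2.mem_iff] at hx
      rcases hx with rfl | rfl
      · exact ha hxm
      · exact hb hxm
    have hle := card_le_matNum hins
    rw [Finset.card_insert_of_notMem hnotmem, hcard] at hle
    omega
  set DS : Set ℕ := {d | ∃ (m : Finset (Sym2 V)) (a b : V), IsMatchingFinset G m ∧
    m.card = t ∧ a ∈ G.support ∧ b ∈ G.support ∧ a ≠ b ∧ a ∉ mcov m ∧ b ∉ mcov m ∧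
    G.dist a b = d} with hDS
  have hDSne : DS.Nonempty := by
    obtain ⟨M₀, hM₀, hcard₀⟩ := exists_max_matching G
    have hsub : mcov M₀ ⊆ G.support := by
      rintro x ⟨e, he, hx⟩
      obtain ⟨w, hw, -⟩ := exists_other (hM₀.1 he) hx
      exact ⟨w, hw⟩
    have hdiff : 1 < (G.support \ mcov M₀).ncard := by
      rw [Set.ncard_diff hsub (Set.toFinite _), mcov_ncard _ hM₀, hcard₀]
      omega
    obtain ⟨a, ha, b, hb, hab⟩ := (Set.one_lt_ncard (Set.toFinite _)).mp hdiff
    exact ⟨G.dist a b, M₀, a, b, hM₀, hcard₀, ha.1, hb.1, hab, ha.2, hb.2, rfl⟩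
  set d := sInf DS with hd
  have hdDS : d ∈ DS := Nat.sInf_mem hDSne
  have hmin : ∀ k, k ∈ DS → d ≤ k := fun k hk => Nat.sInf_le hk
  rw [hDS, Set.mem_setOf_eq] at hdDS
  obtain ⟨M, u, v, hM, hMcard, huS, hvS, huv, huM, hvM, hdist⟩ := hdDS
  have hreach := hconn u huS v hvS
  have hdpos : 0 < d := hdist ▸ hreach.pos_dist_of_ne huv
  have hnadj : ¬ G.Adj u v := fun h => noaug M hM hMcard u v h huM hvM
  obtain ⟨p, hp⟩ := hreach.exists_walk_length_eq_dist
  rw [hdist] at hp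
  have hd2 : 2 ≤ d := by
    rcases Nat.lt_or_ge d 2 with h | h
    · have hone : d = 1 := by omega
      rw [hone] at hp
      exact absurd (p.adj_of_length_eq_one hp) hnadj
    · exact h
  cases p with
  | nil => exact huv rfl
  | @cons _ w _ hadj q =>
    have hlw : q.length + 1 = d := by simpa using hp
    have hwS : w ∈ G.support := ⟨u, hadj.symm⟩
    have hwv : w ≠ v := by
      rintro rfl
      exact hnadj hadj
    have hdistuw : G.dist u w ≤ 1 := by simpa using SimpleGraph.dist_le hadj.toWalk
    have hdistwv : G.dist w v ≤ d - 1 := by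
      have := SimpleGraph.dist_le q
      omega
    have hwM : w ∈ mcov M := by
      by_contra hwm
      have := hmin _ ⟨M, u, w, hM, hMcard, huS, hwS, hadj.ne, huM, hwm, rfl⟩
      omega
    obtain ⟨M', hM', hM'card, hwM'⟩ := hiness w
    have huM' : u ∈ mcov M' := by
      by_contra hum
      have := hmin _ ⟨M', u, w, hM', hM'card, huS, hwS, hadj.ne, hum, hwM', rfl⟩
      omega
    have hvM' : v ∈ mcov M' := by
      by_contra hvm
      have := hmin _ ⟨M', w, v, hM', hM'card, hwS, hvS, hwv, hwM', hvm, rfl⟩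
      omega
    rcases lemF M'.card M M' le_rfl hM hM' u huM huM' with
      ⟨N, hN, hNcard, -⟩ | ⟨z, y, hyzM, -, hzM', ⟨Na, hNa, hNacard, hNacov⟩,
        ⟨Nb, hNb, hNbcard, hNbcov⟩⟩
    · have hle := card_le_matNum hN
      rw [hNcard, hMcard] at hle
      omega
    · have hzS : z ∈ G.support := by
        obtain ⟨wz, hwz, -⟩ := exists_other (hM.1 hyzM) (Sym2.mem_mk_right y z)
        exact ⟨wz, hwz⟩
      by_cases hzw : z = w
      · have hwNa : w ∉ mcov Na := by
          intro h
          exact (hNacov h).2 (by simp [hzw])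
        have hvNa : v ∉ mcov Na := by
          intro h
          rcases (hNacov h).1 with h' | h'
          · exact hvM h'
          · exact huv (Set.mem_singleton_iff.mp h').symm
        have := hmin _ ⟨Na, w, v, hNa, by rw [hNacard, hMcard], hwS, hvS, hwv, hwNa, hvNa, rfl⟩
        omega
      · have huNb : u ∉ mcov Nb := fun h => (hNbcov h).2 rfl
        have hwNb : w ∉ mcov Nb := by
          intro h
          rcases (hNbcov h).1 with h' | h'
          · exact hwM' h'
          · exact hzw (Set.mem_singleton_iff.mp h').symm
        have := hmin _ ⟨Nb, u, w, hNb, by rw [hNbcard, hM'card], huS, hwS, hadj.ne, huNb, hwNb, rfl⟩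
        omega

lemma mem_of_edge_restr {G : SimpleGraph V} {A : Set V} {e : Sym2 V}
    (he : e ∈ (restr G A).edgeSet) {v : V} (hv : v ∈ e) : v ∈ A := by
  revert hv
  induction e with
  | _ a b =>
    intro hv
    rw [Sym2.mem_iff] at hv
    rcases hv with rfl | rfl
    · exact he.2.1
    · exact he.2.2

lemma matNum_split_ge {G : SimpleGraph V} [Fintype V] (A : Set V) :
    matNum (restr G A) + matNum (restr G Aᶜ) ≤ matNum G := by
  classical
  obtain ⟨mA, hmA, hcA⟩ := exists_max_matching (restr G A)
  obtain ⟨mB, hmB, hcB⟩ := exists_max_matching (restr G Aᶜ)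
  have hdisj : Disjoint mA mB := by
    rw [Finset.disjoint_left]
    intro e heA heB
    exact Set.disjoint_left.mp (edgeSet_split_disj G A) (hmA.1 heA) (hmB.1 heB)
  have hm : IsMatchingFinset G (mA ∪ mB) := by
    constructor
    · intro e he
      rw [Finset.coe_union, Set.mem_union] at he
      rcases he with he | he
      · exact restr_edgeSet_subset G A (hmA.1 he)
      · exact restr_edgeSet_subset G Aᶜ (hmB.1 he)
    · intro e he f hf hne x hx
      rw [Finset.mem_union] at he hf
      rcases he with he | he <;> rcases hf with hf | hf
      · exact hmA.2 e he f hf hne x hx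
      · exact (mem_of_edge_restr (hmB.1 hf) hx.2) (mem_of_edge_restr (hmA.1 he) hx.1)
      · exact (mem_of_edge_restr (hmB.1 he) hx.1) (mem_of_edge_restr (hmA.1 hf) hx.2)
      · exact hmB.2 e he f hf hne x hx
  have := card_le_matNum hm
  rwa [Finset.card_union_of_disjoint hdisj, hcA, hcB] at this

lemma KL {W : Type*} [DecidableEq W] [Fintype W] (D : ℕ) (t : ℕ) :
    ∀ (G : SimpleGraph W), 2 * t + 1 ≤ D →
    (∀ v, (G.neighborSet v).ncard ≤ D) → matNum G ≤ t →
    edgeCount G ≤ D * t := by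
  induction t using Nat.strong_induction_on with
  | _ t ih =>
    intro G hD hdeg hmat
    set t₀ := matNum G with ht₀
    by_cases ht₀0 : t₀ = 0
    · have hE : G.edgeSet = ∅ := by
        ext e
        simp only [Set.mem_empty_iff_false, iff_false]
        intro he
        have := one_le_matNum he
        omega
      rw [edgeCount, hE]
      simp
    · have ht₀1 : 1 ≤ t₀ := Nat.one_le_iff_ne_zero.mpr ht₀0
      by_cases hess : ∃ v, matNum (restr G {v}ᶜ) < t₀
      · obtain ⟨v, hv⟩ := hess
        set m := matNum (restr G {v}ᶜ) with hm
        have hmt : m < t := lt_of_lt_of_le hv hmat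
        have h1 : edgeCount (restr G {v}ᶜ) ≤ D * m := by
          apply ih m hmt (restr G {v}ᶜ) (by omega)
            (fun w => le_trans (restr_deg_le G _ w) (hdeg w)) le_rfl
        calc edgeCount G = edgeCount (restr G {v}ᶜ) + (G.neighborSet v).ncard :=
              edgeCount_delete_vertex G v
        _ ≤ D * m + D := Nat.add_le_add h1 (hdeg v)
        _ = D * (m + 1) := by ring
        _ ≤ D * t := Nat.mul_le_mul_left D (by omega)
      · push_neg at hess
        have hiness : ∀ v : W, ∃ mm, IsMatchingFinset G mm ∧ mm.card = matNum G ∧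
            v ∉ mcov mm := fun v => exists_matching_avoid (hess v)
        by_cases hconn : ∀ u ∈ G.support, ∀ v ∈ G.support, G.Reachable u v
        · -- connected support: Gallai case
          classical
          have hS := support_ncard_le G hconn hiness
          have hdegsum : ∑ w : W, G.degree w = 2 * G.edgeFinset.card :=
            G.sum_degrees_eq_twice_card_edges
          have hsupp0 : ∀ w : W, w ∉ G.support.toFinset → G.degree w = 0 := by
            intro w hw
            rw [Set.mem_toFinset, SimpleGraph.mem_support] at hw
            push_neg at hw
            have hnb : G.neighborFinset w = ∅ := by
              ext x
              simp only [SimpleGraph.mem_neighborFinset, Finset.notMem_empty, iff_false]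
              exact hw x
            rw [← SimpleGraph.card_neighborFinset_eq_degree, hnb, Finset.card_empty]
          set s := G.support.toFinset.card with hs
          have hdegle : ∀ w ∈ G.support.toFinset, G.degree w ≤ s - 1 := by
            intro w hw
            have hsub : G.neighborFinset w ⊆ G.support.toFinset.erase w := by
              intro x hx
              rw [SimpleGraph.mem_neighborFinset] at hx
              rw [Finset.mem_erase, Set.mem_toFinset, SimpleGraph.mem_support]
              exact ⟨fun h => G.loopless.irrefl w (h ▸ hx), ⟨w, hx.symm⟩⟩
            calc G.degree w = (G.neighborFinset w).card :=
                  (SimpleGraph.card_neighborFinset_eq_degree G w).symm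
            _ ≤ (G.support.toFinset.erase w).card := Finset.card_le_card hsub
            _ = s - 1 := by rw [Finset.card_erase_of_mem hw]
          have h2E : 2 * edgeCount G ≤ s * (s - 1) := by
            calc 2 * edgeCount G = ∑ w : W, G.degree w := by
                  rw [edgeCount_eq_card_edgeFinset G, hdegsum]
            _ = ∑ w ∈ G.support.toFinset, G.degree w :=
                  (Finset.sum_subset (Finset.subset_univ _) fun w _ hw => hsupp0 w hw).symm
            _ ≤ s * (s - 1) := by
                  have := Finset.sum_le_card_nsmul G.support.toFinset (fun w => G.degree w) (s - 1) hdegle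
                  rw [smul_eq_mul] at this
                  exact this
          have hscard : s ≤ 2 * t₀ + 1 := by
            rw [hs, ← Set.ncard_eq_toFinset_card']
            exact hS
          have hfin : s * (s - 1) ≤ 2 * (t₀ * (2 * t₀ + 1)) := by
            calc s * (s - 1) ≤ (2 * t₀ + 1) * (2 * t₀) := Nat.mul_le_mul hscard (by omega)
            _ = 2 * (t₀ * (2 * t₀ + 1)) := by ring
          have hEt₀ : edgeCount G ≤ t₀ * (2 * t₀ + 1) := by omega
          calc edgeCount G ≤ t₀ * (2 * t₀ + 1) := hEt₀
          _ ≤ t₀ * D := Nat.mul_le_mul_left t₀ (by omega)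
          _ ≤ t * D := Nat.mul_le_mul_right D hmat
          _ = D * t := Nat.mul_comm t D
        · -- disconnected support: split
          push_neg at hconn
          obtain ⟨u, huS, v, hvS, hnr⟩ := hconn
          set A := {x | G.Reachable u x} with hA
          have hclosed : ∀ x y, G.Adj x y → (x ∈ A ↔ y ∈ A) := fun x y hxy =>
            ⟨fun h => h.trans hxy.reachable, fun h => h.trans hxy.symm.reachable⟩
          obtain ⟨u', hu'⟩ := (SimpleGraph.mem_support G).mp huS
          have huA : u ∈ A := SimpleGraph.Reachable.refl u
          have hu'A : u' ∈ A := (hclosed u u' hu').mp huA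
          have hedgeA : s(u, u') ∈ (restr G A).edgeSet :=
            (SimpleGraph.mem_edgeSet _).mpr ⟨hu', huA, hu'A⟩
          obtain ⟨v', hv'⟩ := (SimpleGraph.mem_support G).mp hvS
          have hvA : v ∉ A := hnr
          have hv'A : v' ∉ A := fun h => hvA ((hclosed v' v hv'.symm).mp h)
          have hedgeB : s(v, v') ∈ (restr G Aᶜ).edgeSet :=
            (SimpleGraph.mem_edgeSet _).mpr ⟨hv', hvA, hv'A⟩
          have hμA : 1 ≤ matNum (restr G A) := one_le_matNum hedgeA
          have hμB : 1 ≤ matNum (restr G Aᶜ) := one_le_matNum hedgeB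
          have hsum : matNum (restr G A) + matNum (restr G Aᶜ) ≤ t₀ := matNum_split_ge A
          set a := matNum (restr G A) with ha
          set b := matNum (restr G Aᶜ) with hb
          have haa : a < t := by omega
          have hbb : b < t := by omega
          have h1 : edgeCount (restr G A) ≤ D * a :=
            ih a haa (restr G A) (by omega)
              (fun w => le_trans (restr_deg_le G _ w) (hdeg w)) le_rfl
          have h2 : edgeCount (restr G Aᶜ) ≤ D * b :=
            ih b hbb (restr G Aᶜ) (by omega)
              (fun w => le_trans (restr_deg_le G _ w) (hdeg w)) le_rfl
          calc edgeCount G = edgeCount (restr G A) + edgeCount (restr G Aᶜ) :=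
                edgeCount_split hclosed
          _ ≤ D * a + D * b := Nat.add_le_add h1 h2
          _ = D * (a + b) := by ring
          _ ≤ D * t := Nat.mul_le_mul_left D (by omega)

end Aux



/-- If `Δ ≥ 2`, `G` has no isolated vertices, `Δ(G) = Δ`,
`ν(G) = ⌈Δ/2⌉` and `|E(G)| = Δ⌈Δ/2⌉ + ⌊Δ/2⌋`, then `G` is connected. -/
theorem critical_extremal_connected (Δ : ℕ) (hΔ : 2 ≤ Δ)
    {V : Type*} [Fintype V] (G : SimpleGraph V)
    (hiso : ∀ v, ∃ u, G.Adj v u)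
    (hdeg : maxDeg G = Δ) (hmat : matNum G = (Δ + 1) / 2)
    (hE : edgeCount G = Δ * ((Δ + 1) / 2) + Δ / 2) :
    G.Connected := by
  letI : DecidableEq V := Classical.decEq V
  have hne : Nonempty V := by
    by_contra h
    rw [not_nonempty_iff] at h
    rw [maxDeg, ciSup_of_empty] at hdeg
    rw [Nat.bot_eq_zero] at hdeg
    omega
  have hdegle : ∀ w, (G.neighborSet w).ncard ≤ Δ := by
    intro w
    rw [← hdeg, maxDeg]
    have hbdd : BddAbove (Set.range fun w : V => (G.neighborSet w).ncard) := by
      refine ⟨Fintype.card V, ?_⟩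
      rintro x ⟨w, rfl⟩
      calc (G.neighborSet w).ncard ≤ (Set.univ : Set V).ncard :=
            Set.ncard_le_ncard (Set.subset_univ _) (Set.toFinite _)
      _ = Fintype.card V := by rw [Set.ncard_univ, Nat.card_eq_fintype_card]
    exact le_ciSup hbdd w
  have hpre : G.Preconnected := by
    intro u v
    by_contra hnr
    set A := {x | G.Reachable u x} with hA
    have hclosed : ∀ x y, G.Adj x y → (x ∈ A ↔ y ∈ A) := fun x y hxy =>
      ⟨fun h => h.trans hxy.reachable, fun h => h.trans hxy.symm.reachable⟩
    obtain ⟨u', hu'⟩ := hiso u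
    have huA : u ∈ A := SimpleGraph.Reachable.refl u
    have hu'A : u' ∈ A := (hclosed u u' hu').mp huA
    have hedgeA : s(u, u') ∈ (Aux.restr G A).edgeSet :=
      (SimpleGraph.mem_edgeSet _).mpr ⟨hu', huA, hu'A⟩
    obtain ⟨v', hv'⟩ := hiso v
    have hvA : v ∉ A := hnr
    have hv'A : v' ∉ A := fun h => hvA ((hclosed v' v hv'.symm).mp h)
    have hedgeB : s(v, v') ∈ (Aux.restr G Aᶜ).edgeSet :=
      (SimpleGraph.mem_edgeSet _).mpr ⟨hv', hvA, hv'A⟩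
    have hμA : 1 ≤ matNum (Aux.restr G A) := Aux.one_le_matNum hedgeA
    have hμB : 1 ≤ matNum (Aux.restr G Aᶜ) := Aux.one_le_matNum hedgeB
    have hsum : matNum (Aux.restr G A) + matNum (Aux.restr G Aᶜ) ≤ (Δ + 1) / 2 := by
      rw [← hmat]
      exact Aux.matNum_split_ge A
    set a := matNum (Aux.restr G A) with ha
    set b := matNum (Aux.restr G Aᶜ) with hb
    have h1 : edgeCount (Aux.restr G A) ≤ Δ * a :=
      Aux.KL Δ a (Aux.restr G A) (by omega)
        (fun w => le_trans (Aux.restr_deg_le G _ w) (hdegle w)) le_rfl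
    have h2 : edgeCount (Aux.restr G Aᶜ) ≤ Δ * b :=
      Aux.KL Δ b (Aux.restr G Aᶜ) (by omega)
        (fun w => le_trans (Aux.restr_deg_le G _ w) (hdegle w)) le_rfl
    have hEle : edgeCount G ≤ Δ * ((Δ + 1) / 2) := by
      calc edgeCount G = edgeCount (Aux.restr G A) + edgeCount (Aux.restr G Aᶜ) :=
            Aux.edgeCount_split hclosed
      _ ≤ Δ * a + Δ * b := Nat.add_le_add h1 h2
      _ = Δ * (a + b) := by ring
      _ ≤ Δ * ((Δ + 1) / 2) := Nat.mul_le_mul_left Δ hsum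
    rw [hE] at hEle
    set K := Δ * ((Δ + 1) / 2) with hK
    omega
  exact SimpleGraph.Connected.mk hpre
end

section
/- Let Δ, ν be integers with Δ, ν ≥ 2 such that ⌈Δ/2⌉ divides ν, and let G be a finite simple graph with no isolated vertices, maximum degree at most Δ, matching number at most ν, and exactly Δν + (ν/⌈Δ/2⌉)·⌊Δ/2⌋ edges. Then every connected component C of G has matching number ν(C) = ⌈Δ/2⌉. -/
set_option linter.unusedSectionVars false
set_option linter.unusedVariables false
section Basic
open Finset
open scoped Classical
variable {V : Type*} [Fintype V] {G H : SimpleGraph V}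

lemma isMatchingFinset_empty : IsMatchingFinset G ∅ := by
  constructor
  · simp
  · intro e he; simp at he

lemma matNum_bddAbove :
    BddAbove {n | ∃ m : Finset (Sym2 V), IsMatchingFinset G m ∧ m.card = n} := by
  refine ⟨Fintype.card (Sym2 V), ?_⟩
  rintro n ⟨m, _, rfl⟩
  exact Finset.card_le_univ m

lemma card_le_matNum {m : Finset (Sym2 V)} (h : IsMatchingFinset G m) :
    m.card ≤ matNum G :=
  le_csSup matNum_bddAbove ⟨m, h, rfl⟩

lemma exists_max_matching (G : SimpleGraph V) :
    ∃ m : Finset (Sym2 V), IsMatchingFinset G m ∧ m.card = matNum G := by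
  have hne : {n | ∃ m : Finset (Sym2 V), IsMatchingFinset G m ∧ m.card = n}.Nonempty :=
    ⟨0, ∅, isMatchingFinset_empty, rfl⟩
  have := Nat.sSup_mem hne matNum_bddAbove
  exact this

lemma matNum_le_of_forall {n : ℕ}
    (h : ∀ m : Finset (Sym2 V), IsMatchingFinset G m → m.card ≤ n) :
    matNum G ≤ n := by
  obtain ⟨m, hm, hc⟩ := exists_max_matching G
  rw [← hc]; exact h m hm

lemma IsMatchingFinset.mono (hGH : G ≤ H) {m : Finset (Sym2 V)}
    (h : IsMatchingFinset G m) : IsMatchingFinset H m :=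
  ⟨fun e he => SimpleGraph.edgeSet_mono hGH (h.1 he), h.2⟩

lemma matNum_mono (hGH : G ≤ H) : matNum G ≤ matNum H :=
  matNum_le_of_forall fun m hm => card_le_matNum (hm.mono hGH)

end Basic

section Count
open Finset
open scoped Classical
variable {V : Type*} [Fintype V] {G H : SimpleGraph V}

/-- The endpoints of an edge, as a finset. -/
noncomputable def endpF (e : Sym2 V) : Finset V := Finset.univ.filter (· ∈ e)

@[simp] lemma mem_endpF {v : V} {e : Sym2 V} : v ∈ endpF e ↔ v ∈ e := by
  simp [endpF]

lemma card_endpF {e : Sym2 V} (he : e ∈ G.edgeSet) : (endpF e).card = 2 := by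
  induction e with
  | _ a b =>
    have hab : a ≠ b := ((SimpleGraph.mem_edgeSet G).mp he).ne
    have : endpF s(a, b) = {a, b} := by
      ext x; simp [endpF, Sym2.mem_iff]
    rw [this, Finset.card_insert_of_notMem (by simp [hab]), Finset.card_singleton]

/-- The set of matched vertices of a matching. -/
noncomputable def matchedF (m : Finset (Sym2 V)) : Finset V :=
  Finset.univ.filter (fun v => ∃ e ∈ m, v ∈ e)

@[simp] lemma mem_matchedF {v : V} {m : Finset (Sym2 V)} :
    v ∈ matchedF m ↔ ∃ e ∈ m, v ∈ e := by simp [matchedF]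

lemma matchedF_eq_biUnion (m : Finset (Sym2 V)) : matchedF m = m.biUnion endpF := by
  ext v; simp [matchedF, endpF]

lemma card_matchedF {m : Finset (Sym2 V)} (h : IsMatchingFinset G m) :
    (matchedF m).card = 2 * m.card := by
  rw [matchedF_eq_biUnion, Finset.card_biUnion]
  · rw [Finset.sum_congr rfl (fun e he => card_endpF (h.1 he)), Finset.sum_const,
      smul_eq_mul, mul_comm]
  · intro e he f hf hef
    simp only [Finset.disjoint_left, mem_endpF]
    intro v hv hv'
    exact h.2 e he f hf hef v ⟨hv, hv'⟩

lemma edgeCount_eq_card_edgeFinset (G : SimpleGraph V) :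
    edgeCount G = G.edgeFinset.card := by
  simp [edgeCount, SimpleGraph.edgeFinset, Set.ncard_eq_toFinset_card']

lemma degree_le_maxDeg (v : V) : G.degree v ≤ maxDeg G := by
  have h1 : (G.neighborSet v).ncard = G.degree v := by
    rw [← Nat.card_coe_set_eq, Nat.card_eq_fintype_card, G.card_neighborSet_eq_degree]
  rw [← h1, maxDeg]
  exact le_ciSup (f := fun v => (G.neighborSet v).ncard)
    (Set.Finite.bddAbove (Set.finite_range _)) v

lemma two_mul_edgeCount (G : SimpleGraph V) :
    2 * edgeCount G = ∑ v, G.degree v := by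
  rw [edgeCount_eq_card_edgeFinset, SimpleGraph.sum_degrees_eq_twice_card_edges]

lemma edgeCount_le_choose (G : SimpleGraph V) :
    edgeCount G ≤ (Nat.card V).choose 2 := by
  rw [Nat.card_eq_fintype_card, edgeCount_eq_card_edgeFinset]
  exact SimpleGraph.card_edgeFinset_le_card_choose_two

lemma edgeCount_le_deleteEdges (A : Finset V) :
    edgeCount G ≤ (∑ a ∈ A, G.degree a) +
      edgeCount (G.deleteEdges {e | ∃ a ∈ A, a ∈ e}) := by
  classical
  set s : Set (Sym2 V) := {e | ∃ a ∈ A, a ∈ e}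
  rw [edgeCount_eq_card_edgeFinset, edgeCount_eq_card_edgeFinset]
  have hsub : G.edgeFinset ⊆ (A.biUnion (fun a => G.incidenceFinset a)) ∪
      (G.deleteEdges s).edgeFinset := by
    intro e he
    rw [SimpleGraph.mem_edgeFinset] at he
    by_cases hs : e ∈ s
    · obtain ⟨a, ha, hae⟩ := hs
      exact Finset.mem_union_left _ (Finset.mem_biUnion.mpr ⟨a, ha, by
        rw [SimpleGraph.mem_incidenceFinset]; exact ⟨he, hae⟩⟩)
    · refine Finset.mem_union_right _ ?_
      rw [SimpleGraph.mem_edgeFinset, SimpleGraph.edgeSet_deleteEdges]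
      exact ⟨he, hs⟩
  calc G.edgeFinset.card ≤ _ := Finset.card_le_card hsub
    _ ≤ (A.biUnion (fun a => G.incidenceFinset a)).card +
        (G.deleteEdges s).edgeFinset.card := Finset.card_union_le _ _
    _ ≤ (∑ a ∈ A, G.degree a) + (G.deleteEdges s).edgeFinset.card := by
        refine Nat.add_le_add_right ?_ _
        calc (A.biUnion (fun a => G.incidenceFinset a)).card
            ≤ ∑ a ∈ A, (G.incidenceFinset a).card := Finset.card_biUnion_le
          _ = ∑ a ∈ A, G.degree a := by
              refine Finset.sum_congr rfl fun a _ => ?_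
              exact G.card_incidenceFinset_eq_degree a
  convert Nat.le_refl _

end Count

section Induce
open Finset
open scoped Classical
variable {V : Type*} [Fintype V] {G : SimpleGraph V} {s : Set V}

lemma induce_adj' {a b : ↥s} : (G.induce s).Adj a b ↔ G.Adj a b := Iff.rfl

lemma coe_pmap_subtype (e : Sym2 V) (h : ∀ v ∈ e, v ∈ s) :
    Sym2.map (fun a : ↥s => (a : V)) (e.pmap (fun a ha => ⟨a, ha⟩) h) = e := by
  induction e with
  | _ a b => rfl

lemma mem_pmap_subtype_iff (e : Sym2 V) (h : ∀ v ∈ e, v ∈ s) (v : ↥s) :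
    v ∈ e.pmap (fun a ha => (⟨a, ha⟩ : ↥s)) h ↔ (v : V) ∈ e := by
  constructor
  · intro hv
    have : (v : V) ∈ Sym2.map (fun a : ↥s => (a : V)) (e.pmap (fun a ha => ⟨a, ha⟩) h) :=
      Sym2.mem_map.mpr ⟨v, hv, rfl⟩
    rwa [coe_pmap_subtype] at this
  · intro hv
    have : (v : V) ∈ Sym2.map (fun a : ↥s => (a : V)) (e.pmap (fun a ha => ⟨a, ha⟩) h) := by
      rwa [coe_pmap_subtype]
    obtain ⟨a, ha, hav⟩ := Sym2.mem_map.mp this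
    have : a = v := Subtype.ext hav
    rwa [← this]

/-- Push a matching of an induced subgraph to the ambient graph. -/
lemma matching_image_coe {m : Finset (Sym2 ↥s)} (h : IsMatchingFinset (G.induce s) m) :
    IsMatchingFinset G (m.image (Sym2.map (fun a : ↥s => (a : V)))) ∧
      (m.image (Sym2.map (fun a : ↥s => (a : V)))).card = m.card := by
  have hinj : Function.Injective (Sym2.map (fun a : ↥s => (a : V))) :=
    Sym2.map.injective Subtype.coe_injective
  refine ⟨⟨?_, ?_⟩, Finset.card_image_of_injective _ hinj⟩
  · intro e he
    simp only [Finset.coe_image, Set.mem_image, Finset.mem_coe] at he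
    obtain ⟨f, hf, rfl⟩ := he
    have := h.1 hf
    induction f with
    | _ a b => exact this
  · intro e he f hf hef v hv
    rw [Finset.mem_image] at he hf
    obtain ⟨e', he', rfl⟩ := he
    obtain ⟨f', hf', rfl⟩ := hf
    obtain ⟨a, ha, hav⟩ := Sym2.mem_map.mp hv.1
    obtain ⟨b, hb, hbv⟩ := Sym2.mem_map.mp hv.2
    have hab : a = b := Subtype.ext (hav.trans hbv.symm)
    subst hab
    exact h.2 e' he' f' hf' (fun hh => hef (by rw [hh])) a ⟨ha, hb⟩

/-- Pull a matching of `G` whose edges lie in `s` back to the induced subgraph. -/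
lemma matching_restrict {m : Finset (Sym2 V)} (hm : IsMatchingFinset G m)
    (hin : ∀ e ∈ m, ∀ v ∈ e, v ∈ s) :
    ∃ m' : Finset (Sym2 ↥s), IsMatchingFinset (G.induce s) m' ∧ m'.card = m.card := by
  refine ⟨m.attach.image (fun x => x.1.pmap (fun a ha => ⟨a, ha⟩) (hin x.1 x.2)), ⟨?_, ?_⟩, ?_⟩
  · intro e he
    simp only [Finset.coe_image, Set.mem_image, Finset.mem_coe, Finset.mem_attach] at he
    obtain ⟨⟨f, hf⟩, -, rfl⟩ := he
    have hfe := hm.1 hf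
    have hfin := hin f hf
    -- show the lifted edge is an edge of the induced graph
    induction f with
    | _ a b => exact hfe
  · intro e he f hf hef v hv
    rw [Finset.mem_image] at he hf
    obtain ⟨⟨e', he'⟩, -, rfl⟩ := he
    obtain ⟨⟨f', hf'⟩, -, rfl⟩ := hf
    obtain ⟨hv1, hv2⟩ := hv
    rw [mem_pmap_subtype_iff] at hv1 hv2
    refine hm.2 e' he' f' hf' ?_ v ⟨hv1, hv2⟩
    intro hee
    apply hef
    subst hee
    rfl
  · rw [Finset.card_image_of_injOn, Finset.card_attach]
    intro x _ y _ hxy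
    have := congrArg (Sym2.map (fun a : ↥s => (a : V))) hxy
    rw [coe_pmap_subtype, coe_pmap_subtype] at this
    exact Subtype.ext this

end Induce

noncomputable instance (priority := 5000) {V : Type*} [Finite V] (G : SimpleGraph V) :
    Fintype G.ConnectedComponent := Fintype.ofFinite _

section Comp
open Finset
open scoped Classical
variable {V : Type*} [Fintype V] {G : SimpleGraph V}

/-- The connected component of an edge. -/
noncomputable def ecomp (G : SimpleGraph V) (e : Sym2 V) : G.ConnectedComponent :=
  G.connectedComponentMk (Quot.out e).1

lemma ecomp_eq_iff {e : Sym2 V} (he : e ∈ G.edgeSet) (c : G.ConnectedComponent) :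
    ecomp G e = c ↔ ∀ v ∈ e, v ∈ c.supp := by
  have heq : s((Quot.out e).1, (Quot.out e).2) = e := by
    exact Quot.out_eq e
  set a := (Quot.out e).1
  set b := (Quot.out e).2
  have hadj : G.Adj a b := by rw [← SimpleGraph.mem_edgeSet, heq]; exact he
  have hab : G.connectedComponentMk a = G.connectedComponentMk b :=
    SimpleGraph.ConnectedComponent.connectedComponentMk_eq_of_adj hadj
  constructor
  · rintro rfl v hv
    rw [← heq, Sym2.mem_iff] at hv
    rw [SimpleGraph.ConnectedComponent.mem_supp_iff]
    rcases hv with rfl | rfl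
    · rfl
    · exact hab.symm
  · intro h
    have : a ∈ e := by rw [← heq]; exact Sym2.mem_mk_left _ _
    have := h a this
    rwa [SimpleGraph.ConnectedComponent.mem_supp_iff] at this

lemma card_eq_sum_comp_filter {m : Finset (Sym2 V)} (hm : ↑m ⊆ G.edgeSet) :
    m.card = ∑ c : G.ConnectedComponent,
      (m.filter (fun e => ∀ v ∈ e, v ∈ c.supp)).card := by
  rw [Finset.card_eq_sum_card_fiberwise (f := ecomp G) (t := Finset.univ)
    (fun x _ => Finset.mem_univ _)]
  refine Finset.sum_congr rfl fun c _ => ?_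
  congr 1
  apply Finset.filter_congr
  intro e he
  exact ecomp_eq_iff (hm he) c

lemma matching_filter_comp {m : Finset (Sym2 V)} (hm : IsMatchingFinset G m)
    (c : G.ConnectedComponent) :
    (m.filter (fun e => ∀ v ∈ e, v ∈ c.supp)).card ≤ matNum (G.induce c.supp) := by
  have hsub : IsMatchingFinset G (m.filter (fun e => ∀ v ∈ e, v ∈ c.supp)) := by
    constructor
    · exact fun e he => hm.1 (Finset.mem_of_mem_filter _ (by exact_mod_cast he))
    · intro e he f hf
      exact hm.2 e (Finset.mem_of_mem_filter _ he) f (Finset.mem_of_mem_filter _ hf)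
  obtain ⟨m', hm', hcard⟩ := matching_restrict hsub (fun e he => (Finset.mem_filter.mp he).2)
  rw [← hcard]
  exact card_le_matNum hm'

lemma disjoint_supp {c c' : G.ConnectedComponent} (h : c ≠ c') :
    Disjoint c.supp c'.supp := by
  rw [Set.disjoint_left]
  intro v hv hv'
  rw [SimpleGraph.ConnectedComponent.mem_supp_iff] at hv hv'
  exact h (hv ▸ hv' ▸ rfl)

lemma matNum_eq_sum_comp (G : SimpleGraph V) :
    matNum G = ∑ c : G.ConnectedComponent, matNum (G.induce c.supp) := by
  apply le_antisymm
  · obtain ⟨m, hm, hcard⟩ := exists_max_matching G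
    rw [← hcard, card_eq_sum_comp_filter hm.1]
    exact Finset.sum_le_sum fun c _ => matching_filter_comp hm c
  · -- assemble per-component maximum matchings
    have hch : ∀ c : G.ConnectedComponent, ∃ m' : Finset (Sym2 V),
        IsMatchingFinset G m' ∧ m'.card = matNum (G.induce c.supp) ∧
        ∀ e ∈ m', ∀ v ∈ e, v ∈ c.supp := by
      intro c
      obtain ⟨mc, hmc, hcard⟩ := exists_max_matching (G.induce c.supp)
      obtain ⟨hmG, hcard'⟩ := matching_image_coe hmc
      refine ⟨_, hmG, by rw [hcard', hcard], ?_⟩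
      intro e he v hv
      rw [Finset.mem_image] at he
      obtain ⟨e', _, rfl⟩ := he
      obtain ⟨a, _, rfl⟩ := Sym2.mem_map.mp hv
      exact a.2
    choose f hf1 hf2 hf3 using hch
    have hdisj : ∀ c c' : G.ConnectedComponent, c ≠ c' → ∀ v : V,
        ¬(v ∈ matchedF (f c) ∧ v ∈ matchedF (f c')) := by
      intro c c' hcc v ⟨hv, hv'⟩
      rw [mem_matchedF] at hv hv'
      obtain ⟨e, he, hve⟩ := hv
      obtain ⟨e', he', hve'⟩ := hv'
      exact Set.disjoint_left.mp (disjoint_supp hcc) (hf3 c e he v hve) (hf3 c' e' he' v hve')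
    set M : Finset (Sym2 V) := Finset.univ.biUnion f with hM
    have hMm : IsMatchingFinset G M := by
      constructor
      · intro e he
        rw [hM] at he
        simp only [Finset.coe_biUnion, Finset.mem_coe, Finset.mem_biUnion] at he
        obtain ⟨c, -, hc⟩ := Set.mem_iUnion₂.mp he
        exact (hf1 c).1 hc
      · intro e he g hg hne v hv
        rw [hM, Finset.mem_biUnion] at he hg
        obtain ⟨c, -, hec⟩ := he
        obtain ⟨c', -, hgc⟩ := hg
        by_cases hcc : c = c'
        · subst hcc
          exact (hf1 c).2 e hec g hgc hne v hv
        · exact hdisj c c' hcc v ⟨mem_matchedF.mpr ⟨e, hec, hv.1⟩,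
            mem_matchedF.mpr ⟨g, hgc, hv.2⟩⟩
    have hMcard : M.card = ∑ c : G.ConnectedComponent, matNum (G.induce c.supp) := by
      rw [hM, Finset.card_biUnion]
      · exact Finset.sum_congr rfl fun c _ => hf2 c
      · intro c _ c' _ hcc
        rw [Function.onFun, Finset.disjoint_left]
        intro e hec hec'
        have he : e ∈ G.edgeSet := (hf1 c).1 hec
        obtain ⟨a, b⟩ := e
        exact hdisj c c' hcc a ⟨mem_matchedF.mpr ⟨_, hec, Sym2.mem_mk_left a b⟩,
          mem_matchedF.mpr ⟨_, hec', Sym2.mem_mk_left a b⟩⟩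
    rw [← hMcard]
    exact card_le_matNum hMm

lemma matching_filter_comp_eq_of_max {m : Finset (Sym2 V)} (hm : IsMatchingFinset G m)
    (hmax : m.card = matNum G) (c : G.ConnectedComponent) :
    (m.filter (fun e => ∀ v ∈ e, v ∈ c.supp)).card = matNum (G.induce c.supp) := by
  have h1 := card_eq_sum_comp_filter (G := G) hm.1
  rw [hmax, matNum_eq_sum_comp] at h1
  have := (Finset.sum_eq_sum_iff_of_le
    (fun c (_ : c ∈ Finset.univ) => matching_filter_comp hm c)).mp h1.symm
  exact this c (Finset.mem_univ c)

end Comp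

section Counts
open Finset
open scoped Classical
variable {V : Type*} [Fintype V] {G : SimpleGraph V} {s : Set V} {c : G.ConnectedComponent}

/-- The support of a component as a finset. -/
noncomputable def suppF (G : SimpleGraph V) (c : G.ConnectedComponent) : Finset V :=
  c.supp.toFinset

@[simp] lemma mem_suppF {v : V} : v ∈ suppF G c ↔ v ∈ c.supp := Set.mem_toFinset

lemma card_suppF : (suppF G c).card = Fintype.card ↥(c.supp) := Set.toFinset_card _

lemma edge_supp_closed {e : Sym2 V} (he : e ∈ G.edgeSet) {v w : V}
    (hv : v ∈ e) (hw : w ∈ e) (hc : v ∈ c.supp) : w ∈ c.supp := by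
  induction e with
  | _ a b =>
    have hadj : G.Adj a b := (SimpleGraph.mem_edgeSet G).mp he
    have hcomp : G.connectedComponentMk a = G.connectedComponentMk b :=
      SimpleGraph.ConnectedComponent.connectedComponentMk_eq_of_adj hadj
    rw [Sym2.mem_iff] at hv hw
    rw [SimpleGraph.ConnectedComponent.mem_supp_iff] at hc ⊢
    rcases hw with rfl | rfl <;> rcases hv with rfl | rfl <;>
      simp_all [hcomp]

lemma card_biUnion_endpF {m t : Finset (Sym2 V)} (hm : IsMatchingFinset G m)
    (hts : t ⊆ m) : (t.biUnion endpF).card = 2 * t.card := by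
  rw [Finset.card_biUnion]
  · rw [Finset.sum_congr rfl (fun e he => card_endpF (hm.1 (hts he))), Finset.sum_const,
      smul_eq_mul, mul_comm]
  · intro e he f hf hef
    simp only [Finset.disjoint_left, mem_endpF]
    intro v hv hv'
    exact hm.2 e (hts he) f (hts hf) hef v ⟨hv, hv'⟩

lemma supp_inter_matched {m : Finset (Sym2 V)} (hm : IsMatchingFinset G m) :
    suppF G c ∩ matchedF m
      = (m.filter (fun e => ∀ v ∈ e, v ∈ c.supp)).biUnion endpF := by
  ext v
  simp only [Finset.mem_inter, mem_suppF, mem_matchedF, Finset.mem_biUnion,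
    Finset.mem_filter, mem_endpF]
  constructor
  · rintro ⟨hvs, e, he, hve⟩
    exact ⟨e, ⟨he, fun w hw => edge_supp_closed (hm.1 he) hve hw hvs⟩, hve⟩
  · rintro ⟨e, ⟨he, hsup⟩, hve⟩
    exact ⟨hsup v hve, e, he, hve⟩

lemma card_supp_inter_matched {m : Finset (Sym2 V)} (hm : IsMatchingFinset G m)
    (hmax : m.card = matNum G) :
    (suppF G c ∩ matchedF m).card = 2 * matNum (G.induce c.supp) := by
  rw [supp_inter_matched hm, card_biUnion_endpF hm (Finset.filter_subset _ _),
    matching_filter_comp_eq_of_max hm hmax]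

lemma two_matNum_le_card_supp (G : SimpleGraph V) (c : G.ConnectedComponent) :
    2 * matNum (G.induce c.supp) ≤ (suppF G c).card := by
  obtain ⟨m, hm, hmax⟩ := exists_max_matching G
  rw [← card_supp_inter_matched hm hmax]
  exact Finset.card_le_card (Finset.inter_subset_left)

lemma card_unmatched_comp {m : Finset (Sym2 V)} (hm : IsMatchingFinset G m)
    (hmax : m.card = matNum G) :
    (suppF G c \ matchedF m).card
      = (suppF G c).card - 2 * matNum (G.induce c.supp) := by
  have h1 : suppF G c \ matchedF m = suppF G c \ (suppF G c ∩ matchedF m) := by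
    ext v; simp only [Finset.mem_sdiff, Finset.mem_inter]; tauto
  rw [h1, Finset.card_sdiff_of_subset Finset.inter_subset_left, card_supp_inter_matched hm hmax]

lemma card_edges_in_set_le {t : Finset (Sym2 V)} (ht : ∀ e ∈ t, e ∈ G.edgeSet)
    (hin : ∀ e ∈ t, ∀ v ∈ e, v ∈ s) : t.card ≤ edgeCount (G.induce s) := by
  rw [edgeCount_eq_card_edgeFinset]
  have : (t.attach.image
      (fun x => x.1.pmap (fun a ha => (⟨a, ha⟩ : ↥s)) (hin x.1 x.2))) ⊆
        (G.induce s).edgeFinset := by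
    intro e he
    rw [Finset.mem_image] at he
    obtain ⟨⟨f, hf⟩, -, rfl⟩ := he
    have hfe := ht f hf
    have hfin := hin f hf
    rw [SimpleGraph.mem_edgeFinset]
    induction f with
    | _ a b => exact hfe
  refine le_trans ?_ (Finset.card_le_card this)
  rw [Finset.card_image_of_injOn, Finset.card_attach]
  intro x _ y _ hxy
  have := congrArg (Sym2.map (fun a : ↥s => (a : V))) hxy
  rw [coe_pmap_subtype, coe_pmap_subtype] at this
  exact Subtype.ext this

lemma edgeCount_le_sum_comp (G : SimpleGraph V) :
    edgeCount G ≤ ∑ c : G.ConnectedComponent, edgeCount (G.induce c.supp) := by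
  rw [edgeCount_eq_card_edgeFinset,
    Finset.card_eq_sum_card_fiberwise (f := ecomp G) (t := Finset.univ)
      (fun x _ => Finset.mem_univ _)]
  refine Finset.sum_le_sum fun c _ => ?_
  refine card_edges_in_set_le (fun e he => ?_) (fun e he => ?_)
  · exact SimpleGraph.mem_edgeFinset.mp (Finset.mem_of_mem_filter _ he)
  · rw [Finset.mem_filter] at he
    exact (ecomp_eq_iff (SimpleGraph.mem_edgeFinset.mp he.1) c).mp he.2

lemma degree_induce_le (v : ↥s) : (G.induce s).degree v ≤ G.degree (v : V) := by
  rw [← SimpleGraph.card_neighborFinset_eq_degree, ← SimpleGraph.card_neighborFinset_eq_degree]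
  refine Finset.card_le_card_of_injOn (fun u => (u : V)) (fun u hu => ?_)
    (fun x _ y _ h => Subtype.ext h)
  simp only [Finset.mem_coe, SimpleGraph.mem_neighborFinset] at hu ⊢
  exact hu

lemma two_mul_edgeCount_induce_le {D : ℕ} (hD : ∀ v, G.degree v ≤ D) (s : Set V) :
    2 * edgeCount (G.induce s) ≤ D * Nat.card ↥s := by
  rw [Nat.card_eq_fintype_card, two_mul_edgeCount]
  calc ∑ v : ↥s, (G.induce s).degree v ≤ ∑ _v : ↥s, D :=
        Finset.sum_le_sum fun v _ => le_trans (degree_induce_le v) (hD v)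
    _ = D * Fintype.card ↥s := by rw [Finset.sum_const, smul_eq_mul, mul_comm, Fintype.card]

lemma card_suppF_nat : (suppF G c).card = Nat.card ↥(c.supp) := by
  rw [Nat.card_coe_set_eq, Set.ncard_eq_toFinset_card']
  rfl

lemma two_mul_edgeCount_comp_le {D : ℕ} (hD : ∀ v, G.degree v ≤ D)
    (c : G.ConnectedComponent) :
    2 * edgeCount (G.induce c.supp) ≤ D * (suppF G c).card := by
  rw [card_suppF_nat]
  exact two_mul_edgeCount_induce_le hD c.supp

lemma edgeCount_comp_le_choose (c : G.ConnectedComponent) :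
    edgeCount (G.induce c.supp) ≤ ((suppF G c).card).choose 2 := by
  rw [card_suppF_nat]
  exact edgeCount_le_choose (G.induce c.supp)

end Counts

section Rec
open Finset
open scoped Classical
variable {V : Type*} [Fintype V] {G : SimpleGraph V}

/-- Delete all edges incident to a set of vertices. -/
def Gdel (G : SimpleGraph V) (A : Finset V) : SimpleGraph V :=
  G.deleteEdges {e | ∃ a ∈ A, a ∈ e}

lemma Gdel_empty (G : SimpleGraph V) : Gdel G ∅ = G := by
  have : {e : Sym2 V | ∃ a ∈ (∅ : Finset V), a ∈ e} = ∅ := by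
    ext e; simp
  rw [Gdel, this, SimpleGraph.deleteEdges_empty]

lemma Gdel_le (G : SimpleGraph V) (A : Finset V) : Gdel G A ≤ G :=
  SimpleGraph.deleteEdges_le _

lemma Gdel_insert (v : V) (A : Finset V) :
    Gdel G (insert v A) = Gdel (G.deleteEdges {e | v ∈ e}) A := by
  rw [Gdel, Gdel, SimpleGraph.deleteEdges_deleteEdges]
  congr 1
  ext e
  simp [Finset.mem_insert, or_and_right, exists_or]

lemma degree_mono {G H : SimpleGraph V} (h : H ≤ G) (v : V) :
    H.degree v ≤ G.degree v := by
  rw [← SimpleGraph.card_neighborFinset_eq_degree, ← SimpleGraph.card_neighborFinset_eq_degree]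
  apply Finset.card_le_card
  intro u hu
  rw [SimpleGraph.mem_neighborFinset] at hu ⊢
  exact h hu

/-- Essential-vertex recursion: we can delete a set `A` of vertices (edge-wise),
accounting each for one unit of matching number, so that the remaining graph has no
essential vertex. -/
lemma exists_terminal_del (G : SimpleGraph V) :
    ∃ A : Finset V, A.card + matNum (Gdel G A) ≤ matNum G ∧
      ∀ v, matNum ((Gdel G A).deleteEdges {e | v ∈ e}) = matNum (Gdel G A) := by
  generalize hn : matNum G = n
  induction n using Nat.strong_induction_on generalizing G with
  | _ n ih =>
    by_cases h : ∀ v, matNum (G.deleteEdges {e | v ∈ e}) = matNum G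
    · refine ⟨∅, ?_, ?_⟩
      · rw [Gdel_empty]; simp; omega
      · rw [Gdel_empty]; exact h
    · push_neg at h
      obtain ⟨v, hv⟩ := h
      set G' := G.deleteEdges {e : Sym2 V | v ∈ e} with hG'
      have hle : matNum G' ≤ matNum G := matNum_mono (SimpleGraph.deleteEdges_le _)
      have hlt : matNum G' < n := hn ▸ lt_of_le_of_ne hle hv
      obtain ⟨A', hA1, hA2⟩ := ih (matNum G') hlt G' rfl
      refine ⟨insert v A', ?_, ?_⟩
      · have hins : (insert v A').card ≤ A'.card + 1 := Finset.card_insert_le _ _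
        rw [Gdel_insert, ← hG']
        omega
      · rw [Gdel_insert, ← hG']; exact hA2

end Rec

section GallaiPrep
open Finset
open scoped Classical
variable {V : Type*} [Fintype V] {G : SimpleGraph V}

/-- Two adjacent unmatched vertices let us augment a matching. -/
lemma matching_insert {m : Finset (Sym2 V)} (hm : IsMatchingFinset G m)
    {u w : V} (huw : G.Adj u w) (hu : u ∉ matchedF m) (hw : w ∉ matchedF m) :
    IsMatchingFinset G (insert s(u, w) m) ∧ (insert s(u, w) m).card = m.card + 1 := by
  simp only [mem_matchedF, not_exists] at hu hw
  push_neg at hu hw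
  have hnotmem : s(u, w) ∉ m := fun h => hu _ h (Sym2.mem_mk_left u w)
  refine ⟨⟨?_, ?_⟩, by rw [Finset.card_insert_of_notMem hnotmem]⟩
  · intro e he
    simp only [Finset.coe_insert, Set.mem_insert_iff, Finset.mem_coe] at he
    rcases he with rfl | he
    · exact huw
    · exact hm.1 he
  · intro e he f hf hef v hv
    rw [Finset.mem_insert] at he hf
    rcases he with rfl | he <;> rcases hf with rfl | hf
    · exact hef rfl
    · rcases Sym2.mem_iff.mp hv.1 with rfl | rfl
      · exact hu _ hf hv.2
      · exact hw _ hf hv.2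
    · rcases Sym2.mem_iff.mp hv.2 with rfl | rfl
      · exact hu _ he hv.1
      · exact hw _ he hv.1
    · exact hm.2 e he f hf hef v hv

lemma no_aug {m : Finset (Sym2 V)} (hm : IsMatchingFinset G m) (hmax : m.card = matNum G)
    {u w : V} (huw : G.Adj u w) (hu : u ∉ matchedF m) : w ∈ matchedF m := by
  by_contra hw
  obtain ⟨hm', hc'⟩ := matching_insert hm huw hu hw
  have := card_le_matNum hm'
  omega

/-- From a vertex in an edge, get the other endpoint. -/
lemma exists_other {e : Sym2 V} (he : e ∈ G.edgeSet) {y : V} (hy : y ∈ e) :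
    ∃ z, z ≠ y ∧ e = s(y, z) ∧ G.Adj y z := by
  induction e with
  | _ a b =>
    have hadj : G.Adj a b := (SimpleGraph.mem_edgeSet G).mp he
    rcases Sym2.mem_iff.mp hy with rfl | rfl
    · exact ⟨b, hadj.ne', rfl, hadj⟩
    · exact ⟨a, hadj.ne, Sym2.eq_swap, hadj.symm⟩

/-- In a graph with no essential vertex, every vertex avoids some maximum matching. -/
lemma exists_max_matching_avoiding
    (hterm : ∀ v, matNum (G.deleteEdges {e | v ∈ e}) = matNum G) (x : V) :
    ∃ m, IsMatchingFinset G m ∧ m.card = matNum G ∧ x ∉ matchedF m := by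
  obtain ⟨m, hm, hc⟩ := exists_max_matching (G.deleteEdges {e : Sym2 V | x ∈ e})
  refine ⟨m, hm.mono (SimpleGraph.deleteEdges_le _), by rw [hc, hterm], ?_⟩
  rw [mem_matchedF]
  rintro ⟨e, he, hxe⟩
  have := hm.1 he
  rw [SimpleGraph.edgeSet_deleteEdges] at this
  exact this.2 hxe

end GallaiPrep

section GallaiExchange
open Finset
open scoped Classical
variable {V : Type*} [Fintype V] {G : SimpleGraph V}

lemma exchange {M N : Finset (Sym2 V)} (hM : IsMatchingFinset G M)
    (hN : IsMatchingFinset G N) (hNc : N.card = matNum G) {x : V} (hxN : x ∉ matchedF N)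
    (hNbest : ∀ N', IsMatchingFinset G N' → N'.card = matNum G → x ∉ matchedF N' →
      (M ∩ N').card ≤ (M ∩ N).card)
    {y : V} (hy : y ∉ matchedF N) (hyx : y ≠ x) : y ∉ matchedF M := by
  by_contra hyM
  rw [mem_matchedF] at hyM
  obtain ⟨e₀, he₀M, hye₀⟩ := hyM
  obtain ⟨z, hzy, he₀eq, hyzadj⟩ := exists_other (hM.1 he₀M) hye₀
  -- z must be matched in N
  have hzN : z ∈ matchedF N := no_aug hN hNc hyzadj hy
  rw [mem_matchedF] at hzN
  obtain ⟨f₀, hf₀N, hzf₀⟩ := hzN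
  obtain ⟨t, htz, hf₀eq, hztadj⟩ := exists_other (hN.1 hf₀N) hzf₀
  have hty : t ≠ y := by
    rintro rfl
    exact (mem_matchedF.not.mp hy) ⟨f₀, hf₀N, by rw [hf₀eq]; exact Sym2.mem_mk_right z _⟩
  have he₀f₀ : e₀ ≠ f₀ := by
    rw [he₀eq, hf₀eq]
    intro h
    have : y ∈ s(z, t) := h ▸ Sym2.mem_mk_left y z
    rcases Sym2.mem_iff.mp this with rfl | rfl
    · exact hzy rfl
    · exact hty rfl
  have hf₀M : f₀ ∉ M := by
    intro hf₀M
    exact hM.2 e₀ he₀M f₀ hf₀M he₀f₀ z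
      ⟨by rw [he₀eq]; exact Sym2.mem_mk_right y z, hzf₀⟩
  have he₀N : e₀ ∉ N := fun h => (mem_matchedF.not.mp hy) ⟨e₀, h, hye₀⟩
  -- the swapped matching
  set N' : Finset (Sym2 V) := insert e₀ (N.erase f₀) with hN'def
  have hxz : x ≠ z := by
    rintro rfl
    exact (mem_matchedF.not.mp hxN) ⟨f₀, hf₀N, hzf₀⟩
  have hN'm : IsMatchingFinset G N' := by
    constructor
    · intro e he
      simp only [hN'def, Finset.coe_insert, Set.mem_insert_iff, Finset.mem_coe] at he
      rcases he with rfl | he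
      · exact hM.1 he₀M
      · exact hN.1 (Finset.mem_of_mem_erase he)
    · intro e he f hf hef v hv
      rw [hN'def, Finset.mem_insert] at he hf
      have key : ∀ g ∈ N.erase f₀, ∀ v : V, v ∈ e₀ → v ∈ g → False := by
        intro g hg v hve₀ hvg
        have hgN := Finset.mem_of_mem_erase hg
        have hgf₀ := Finset.ne_of_mem_erase hg
        rw [he₀eq, Sym2.mem_iff] at hve₀
        rcases hve₀ with rfl | rfl
        · exact (mem_matchedF.not.mp hy) ⟨g, hgN, hvg⟩
        · exact hN.2 g hgN f₀ hf₀N hgf₀ v ⟨hvg, hzf₀⟩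
      rcases he with rfl | he <;> rcases hf with rfl | hf
      · exact hef rfl
      · exact key f hf v hv.1 hv.2
      · exact key e he v hv.2 hv.1
      · exact hN.2 e (Finset.mem_of_mem_erase he) f (Finset.mem_of_mem_erase hf) hef v hv
  have hN'c : N'.card = matNum G := by
    rw [hN'def, Finset.card_insert_of_notMem (fun h => he₀N (Finset.mem_of_mem_erase h)),
      Finset.card_erase_of_mem hf₀N, ← hNc]
    have : 0 < N.card := Finset.card_pos.mpr ⟨f₀, hf₀N⟩
    omega
  have hxN' : x ∉ matchedF N' := by
    rw [mem_matchedF]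
    rintro ⟨e, he, hxe⟩
    rw [hN'def, Finset.mem_insert] at he
    rcases he with rfl | he
    · rw [he₀eq, Sym2.mem_iff] at hxe
      rcases hxe with rfl | rfl
      · exact hyx rfl
      · exact hxz rfl
    · exact (mem_matchedF.not.mp hxN) ⟨e, Finset.mem_of_mem_erase he, hxe⟩
  -- the intersection grew
  have hgrow : (M ∩ N).card < (M ∩ N').card := by
    have hsub : insert e₀ (M ∩ N) ⊆ M ∩ N' := by
      intro e he
      rw [Finset.mem_insert] at he
      rw [Finset.mem_inter, hN'def]
      rcases he with rfl | he
      · exact ⟨he₀M, Finset.mem_insert_self _ _⟩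
      · rw [Finset.mem_inter] at he
        refine ⟨he.1, Finset.mem_insert_of_mem (Finset.mem_erase.mpr ⟨?_, he.2⟩)⟩
        rintro rfl
        exact hf₀M he.1
    calc (M ∩ N).card < (insert e₀ (M ∩ N)).card := by
          rw [Finset.card_insert_of_notMem (fun h => he₀N (Finset.mem_inter.mp h).2)]
          omega
      _ ≤ (M ∩ N').card := Finset.card_le_card hsub
  exact absurd (hNbest N' hN'm hN'c hxN') (by omega)

end GallaiExchange

section Gallai
open Finset
open scoped Classical
variable {V : Type*} [Fintype V] {G : SimpleGraph V}

/-- Gallai's lemma (global form): in a graph where no vertex is essential, every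
connected component has a near-perfect matching. -/
lemma gallai (hterm : ∀ v, matNum (G.deleteEdges {e | v ∈ e}) = matNum G)
    (c : G.ConnectedComponent) :
    (suppF G c).card ≤ 2 * matNum (G.induce c.supp) + 1 := by
  by_contra hbad
  push_neg at hbad
  set S : Set ℕ := {d | ∃ (M : Finset (Sym2 V)) (u w : V), IsMatchingFinset G M ∧
    M.card = matNum G ∧ u ∉ matchedF M ∧ w ∉ matchedF M ∧ u ≠ w ∧ G.Reachable u w ∧
    G.dist u w = d} with hS
  have mkS : ∀ (M : Finset (Sym2 V)) (u w : V), IsMatchingFinset G M →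
      M.card = matNum G → u ∉ matchedF M → w ∉ matchedF M → u ≠ w → G.Reachable u w →
      G.dist u w ∈ S := fun M u w h1 h2 h3 h4 h5 h6 => ⟨M, u, w, h1, h2, h3, h4, h5, h6, rfl⟩
  have hStwo : ∀ (M : Finset (Sym2 V)) (c' : G.ConnectedComponent),
      IsMatchingFinset G M → M.card = matNum G →
      2 * matNum (G.induce c'.supp) + 1 < (suppF G c').card →
      ∃ u w, u ∈ suppF G c' \ matchedF M ∧ w ∈ suppF G c' \ matchedF M ∧ u ≠ w := by
    intro M c' h1 h2 hb
    have hcu := card_unmatched_comp (c := c') h1 h2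
    have h2card : 1 < (suppF G c' \ matchedF M).card := by omega
    obtain ⟨u, hu, w, hw, huw⟩ := Finset.one_lt_card.mp h2card
    exact ⟨u, w, hu, hw, huw⟩
  have hSne : S.Nonempty := by
    obtain ⟨M, h1, h2⟩ := exists_max_matching G
    obtain ⟨u, w, hu, hw, huw⟩ := hStwo M c h1 h2 hbad
    rw [Finset.mem_sdiff] at hu hw
    have hru : G.connectedComponentMk u = c :=
      (SimpleGraph.ConnectedComponent.mem_supp_iff _ _).mp (mem_suppF.mp hu.1)
    have hrw : G.connectedComponentMk w = c :=
      (SimpleGraph.ConnectedComponent.mem_supp_iff _ _).mp (mem_suppF.mp hw.1)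
    exact ⟨_, mkS M u w h1 h2 hu.2 hw.2 huw
      (SimpleGraph.ConnectedComponent.exact (hru.trans hrw.symm))⟩
  set d := sInf S with hd
  obtain ⟨M, u, w, hM, hMc, huM, hwM, huw, hreach, hdist⟩ : d ∈ S := Nat.sInf_mem hSne
  have hmin : ∀ d' ∈ S, d ≤ d' := fun d' hd' => Nat.sInf_le hd'
  have hdpos : 0 < d := hdist ▸ hreach.pos_dist_of_ne huw
  have hd2 : 2 ≤ d := by
    by_contra h
    have hd1 : G.dist u w = 1 := by omega
    have hadj : G.Adj u w := SimpleGraph.dist_eq_one_iff_adj.mp hd1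
    exact hwM (no_aug hM hMc hadj huM)
  -- a geodesic from u to w, and its second vertex x
  obtain ⟨p, hp⟩ := SimpleGraph.exists_walk_of_dist_ne_zero (G := G) (u := u) (v := w)
    (by omega)
  have hpnotnil : ¬p.Nil := by
    rw [SimpleGraph.Walk.not_nil_iff_lt_length]
    omega
  set x := p.getVert 1 with hx
  have hux : G.Adj u x := p.adj_snd hpnotnil
  have htail : p.tail.length + 1 = p.length := SimpleGraph.Walk.length_tail_add_one hpnotnil
  have hdxw : G.dist x w ≤ d - 1 := by
    have h1 : G.dist x w ≤ p.tail.length := SimpleGraph.dist_le p.tail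
    omega
  have hxw : x ≠ w := by
    intro h
    have hadj : G.Adj u w := h ▸ hux
    have : G.dist u w ≤ 1 := by
      simpa using SimpleGraph.dist_le (SimpleGraph.Walk.cons hadj SimpleGraph.Walk.nil)
    omega
  have hreach_xw : G.Reachable x w := ⟨p.tail⟩
  have hxM : x ∈ matchedF M := by
    by_contra hxM
    have := hmin _ (mkS M x w hM hMc hxM hwM hxw hreach_xw)
    omega
  -- choose a maximum matching avoiding x with maximal intersection with M
  set 𝒩 : Finset (Finset (Sym2 V)) := Finset.univ.filter (fun N => IsMatchingFinset G N ∧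
    N.card = matNum G ∧ x ∉ matchedF N) with h𝒩
  have h𝒩ne : 𝒩.Nonempty := by
    obtain ⟨N₀, h1, h2, h3⟩ := exists_max_matching_avoiding hterm x
    exact ⟨N₀, Finset.mem_filter.mpr ⟨Finset.mem_univ _, h1, h2, h3⟩⟩
  obtain ⟨N, hN𝒩, hNbest⟩ := Finset.exists_max_image 𝒩 (fun N => (M ∩ N).card) h𝒩ne
  rw [h𝒩, Finset.mem_filter] at hN𝒩
  obtain ⟨-, hN, hNc, hxN⟩ := hN𝒩
  have hNbest' : ∀ N', IsMatchingFinset G N' → N'.card = matNum G → x ∉ matchedF N' →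
      (M ∩ N').card ≤ (M ∩ N).card := by
    intro N' h1 h2 h3
    exact hNbest N' (Finset.mem_filter.mpr ⟨Finset.mem_univ _, h1, h2, h3⟩)
  -- the component of u, w, x
  set c' := G.connectedComponentMk u with hc'
  have husupp : u ∈ suppF G c' := mem_suppF.mpr rfl
  have hwsupp : w ∈ suppF G c' :=
    mem_suppF.mpr (SimpleGraph.ConnectedComponent.sound hreach.symm)
  have hxsupp : x ∈ suppF G c' :=
    mem_suppF.mpr (SimpleGraph.ConnectedComponent.sound hux.symm.reachable)
  have hUM := card_unmatched_comp (c := c') hM hMc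
  have hUN := card_unmatched_comp (c := c') hN hNc
  have hpair : ({u, w} : Finset V) ⊆ suppF G c' \ matchedF M := by
    intro v hv
    rw [Finset.mem_insert, Finset.mem_singleton] at hv
    rw [Finset.mem_sdiff]
    rcases hv with rfl | rfl
    · exact ⟨husupp, huM⟩
    · exact ⟨hwsupp, hwM⟩
  have hpaircard : ({u, w} : Finset V).card = 2 := by
    rw [Finset.card_insert_of_notMem (by simp [huw]), Finset.card_singleton]
  have hr2 : 2 ≤ (suppF G c' \ matchedF M).card := by
    have := Finset.card_le_card hpair
    omega
  have hincl : suppF G c' \ matchedF N ⊆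
      insert x ((suppF G c' \ matchedF M) \ {u, w}) := by
    intro y hy
    rw [Finset.mem_sdiff] at hy
    obtain ⟨hysupp, hyN⟩ := hy
    by_cases hyx : y = x
    · subst hyx; exact Finset.mem_insert_self _ _
    · have hyM : y ∉ matchedF M := exchange hM hN hNc hxN hNbest' hyN hyx
      refine Finset.mem_insert_of_mem (Finset.mem_sdiff.mpr
        ⟨Finset.mem_sdiff.mpr ⟨hysupp, hyM⟩, ?_⟩)
      simp only [Finset.mem_insert, Finset.mem_singleton]
      rintro (rfl | rfl)
      · -- y = u : the pair (u, x) for N has distance 1 < d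
        have h1 : G.dist y x = 1 := SimpleGraph.dist_eq_one_iff_adj.mpr hux
        have h2 := hmin _ (mkS N y x hN hNc hyN hxN hux.ne hux.reachable)
        omega
      · -- y = w : the pair (x, w) for N has distance < d
        have h2 := hmin _ (mkS N x y hN hNc hxN hyN hxw hreach_xw)
        omega
  have hcard_sdiff : ((suppF G c' \ matchedF M) \ ({u, w} : Finset V)).card
      = (suppF G c' \ matchedF M).card - 2 := by
    rw [Finset.card_sdiff_of_subset hpair, hpaircard]
  have hfinal : (suppF G c' \ matchedF N).card ≤
      ((suppF G c' \ matchedF M) \ ({u, w} : Finset V)).card + 1 := by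
    calc (suppF G c' \ matchedF N).card
        ≤ (insert x ((suppF G c' \ matchedF M) \ ({u, w} : Finset V))).card :=
          Finset.card_le_card hincl
      _ ≤ _ := Finset.card_insert_le _ _
  have hb1 := two_matNum_le_card_supp G c'
  omega

end Gallai

section Final
open Finset
open scoped Classical

theorem extremal_component_matNum_of_dvd' (Δ ν : ℕ) (hΔ : 2 ≤ Δ) (hν : 2 ≤ ν)
    (hdvd : (Δ + 1) / 2 ∣ ν)
    {V : Type*} [Fintype V] (G : SimpleGraph V)
    (hiso : ∀ v, ∃ u, G.Adj v u)
    (hdeg : maxDeg G ≤ Δ) (hmat : matNum G ≤ ν)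
    (hE : edgeCount G = Δ * ν + (ν / ((Δ + 1) / 2)) * (Δ / 2)) :
    ∀ c : G.ConnectedComponent, matNum (G.induce c.supp) = (Δ + 1) / 2 := by
  set k := (Δ + 1) / 2 with hk
  set b := Δ / 2 with hb
  set q := ν / k with hqdef
  have hkpos : 0 < k := by omega
  have hbpos : 0 < b := by omega
  have hq : k * q = ν := by
    rw [hqdef]; exact Nat.mul_div_cancel' hdvd
  have hdegv : ∀ v, G.degree v ≤ Δ := fun v => (degree_le_maxDeg v).trans hdeg
  -- the terminal deletion
  obtain ⟨A, hAcard, hAterm⟩ := exists_terminal_del G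
  set H := Gdel G A with hH
  have hHle : H ≤ G := Gdel_le G A
  have hHdeg : ∀ v, H.degree v ≤ Δ := fun v => (degree_mono hHle v).trans (hdegv v)
  have hnear : ∀ c : H.ConnectedComponent,
      (suppF H c).card ≤ 2 * matNum (H.induce c.supp) + 1 := gallai hAterm
  -- abbreviations
  set f : H.ConnectedComponent → ℕ := fun c => matNum (H.induce c.supp) with hf
  set m := matNum H with hm
  have hsum : m = ∑ c : H.ConnectedComponent, f c := matNum_eq_sum_comp H
  set T : Finset H.ConnectedComponent := Finset.univ.filter (fun c => k ≤ f c) with hT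
  set t := T.card with ht
  -- per-component edge bounds
  have hec : ∀ c : H.ConnectedComponent,
      edgeCount (H.induce c.supp) ≤ Δ * f c + (if k ≤ f c then b else 0) := by
    intro c
    have hcard : (suppF H c).card ≤ 2 * f c + 1 := hnear c
    by_cases hbig : k ≤ f c
    · have h2e := two_mul_edgeCount_comp_le hHdeg c
      have h3 : Δ * (suppF H c).card ≤ Δ * (2 * f c + 1) :=
        Nat.mul_le_mul_left Δ hcard
      have h4 : Δ * (2 * f c + 1) = 2 * (Δ * f c) + Δ := by ring
      simp only [hbig, if_true]
      omega
    · have h2ν1 : 2 * f c + 1 ≤ Δ := by omega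
      have h1 : edgeCount (H.induce c.supp) ≤ ((suppF H c).card).choose 2 :=
        edgeCount_comp_le_choose _
      have h2 : ((suppF H c).card).choose 2
          = (suppF H c).card * ((suppF H c).card - 1) / 2 :=
        Nat.choose_two_right _
      have h3 : (suppF H c).card * ((suppF H c).card - 1)
          ≤ (2 * f c + 1) * (2 * f c) := Nat.mul_le_mul hcard (by omega)
      have h4 : (2 * f c + 1) * (2 * f c) = 2 * ((2 * f c + 1) * f c) := by ring
      have h5 : (2 * f c + 1) * f c ≤ Δ * f c := Nat.mul_le_mul_right _ h2ν1
      simp only [hbig, if_false]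
      omega
  -- summed edge bound
  have hesum : edgeCount H ≤ Δ * m + t * b := by
    calc edgeCount H ≤ ∑ c : H.ConnectedComponent, edgeCount (H.induce c.supp) :=
          edgeCount_le_sum_comp H
      _ ≤ ∑ c : H.ConnectedComponent, (Δ * f c + (if k ≤ f c then b else 0)) :=
          Finset.sum_le_sum fun c _ => hec c
      _ = Δ * m + t * b := by
          rw [Finset.sum_add_distrib, ← Finset.mul_sum, ← hsum]
          congr 1
          rw [← Finset.sum_filter, ← hT, Finset.sum_const, smul_eq_mul]
  -- total edge bound
  have htot : edgeCount G ≤ Δ * A.card + (Δ * m + t * b) := by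
    have h1 := edgeCount_le_deleteEdges (G := G) A
    have h2 : (∑ a ∈ A, G.degree a) ≤ A.card * Δ := by
      have := Finset.sum_le_card_nsmul A (fun a => G.degree a) Δ (fun a _ => hdegv a)
      rwa [smul_eq_mul] at this
    have h3 : edgeCount (G.deleteEdges {e | ∃ a ∈ A, a ∈ e}) = edgeCount H := rfl
    rw [h3] at h1
    calc edgeCount G ≤ (∑ a ∈ A, G.degree a) + edgeCount H := h1
      _ ≤ A.card * Δ + (Δ * m + t * b) := by omega
      _ = Δ * A.card + (Δ * m + t * b) := by ring_nf
  -- matching number accounting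
  have hSν : A.card + m ≤ ν := le_trans hAcard hmat
  have hkt : k * t ≤ m := by
    have h1 : ∀ c ∈ T, k ≤ f c := fun c hc => (Finset.mem_filter.mp hc).2
    have h2 : T.card • k ≤ ∑ c ∈ T, f c := Finset.card_nsmul_le_sum _ _ _ h1
    have h3 : ∑ c ∈ T, f c ≤ ∑ c : H.ConnectedComponent, f c :=
      Finset.sum_le_sum_of_subset (Finset.subset_univ T)
    rw [smul_eq_mul, ← ht, mul_comm t k] at h2
    omega
  have htq : t ≤ q := by
    have : k * t ≤ k * q := by omega
    exact Nat.le_of_mul_le_mul_left this hkpos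
  -- the equality chain
  have hchain : Δ * ν + q * b ≤ Δ * (A.card + m) + t * b := by
    have : Δ * A.card + Δ * m = Δ * (A.card + m) := by ring
    omega
  have hAm : Δ * (A.card + m) ≤ Δ * ν := Nat.mul_le_mul_left Δ hSν
  have htbqb : t * b ≤ q * b := Nat.mul_le_mul_right b htq
  have heq1 : Δ * (A.card + m) = Δ * ν ∧ t * b = q * b := by
    constructor <;> omega
  have hAmν : A.card + m = ν := Nat.eq_of_mul_eq_mul_left (by omega) heq1.1
  have htq' : t = q := Nat.eq_of_mul_eq_mul_right hbpos heq1.2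
  have hA0 : A.card = 0 := by
    have h1 : k * t = k * q := by rw [htq']
    omega
  have hmν : m = ν := by omega
  -- transport back to G
  have hAempty : A = ∅ := Finset.card_eq_zero.mp hA0
  have hHG : H = G := by rw [hH, hAempty, Gdel_empty]
  have hisoH : ∀ v, ∃ u, H.Adj v u := by rw [hHG]; exact hiso
  -- each component has matching number exactly k
  have hclaim : ∀ c : H.ConnectedComponent, f c = k := by
    intro c
    by_cases hbig : k ≤ f c
    · -- c ∈ T; use that the members of T sum to at most ν = k * t
      have hcT : c ∈ T := Finset.mem_filter.mpr ⟨Finset.mem_univ c, hbig⟩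
      have h1 : ∑ c' ∈ T, f c' ≤ ν := by
        have := Finset.sum_le_sum_of_subset (Finset.subset_univ T) (f := f)
        omega
      have h2 : ∑ c' ∈ T, f c' = f c + ∑ c' ∈ T.erase c, f c' :=
        (Finset.add_sum_erase _ _ hcT).symm
      have h3 : (T.erase c).card • k ≤ ∑ c' ∈ T.erase c, f c' :=
        Finset.card_nsmul_le_sum _ _ _
          (fun c' hc' => (Finset.mem_filter.mp (Finset.mem_of_mem_erase hc')).2)
      have h4 : (T.erase c).card = t - 1 := by
        rw [Finset.card_erase_of_mem hcT, ← ht]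
      have htpos : 1 ≤ t := by
        have := Finset.card_pos.mpr ⟨c, hcT⟩
        omega
      rw [h4, smul_eq_mul] at h3
      have h5 : k * ((t - 1) + 1) = k * t := by congr 1; omega
      have h6 : k * ((t - 1) + 1) = k * (t - 1) + k := by rw [Nat.mul_add, mul_one]
      have h6' : (t - 1) * k = k * (t - 1) := mul_comm _ _
      have h7 : k * t = ν := by rw [htq', hq]
      omega
    · -- c outside T has f c = 0, contradicting hiso
      exfalso
      have hcT : c ∉ T := fun h => hbig (Finset.mem_filter.mp h).2
      have hzero : ∑ c' ∈ Finset.univ.filter (fun c => ¬ k ≤ f c), f c' = 0 := by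
        have hsplit := Finset.sum_filter_add_sum_filter_not Finset.univ
          (fun c => k ≤ f c) f
        rw [← hT] at hsplit
        have h1 : ∑ c' ∈ T, f c' ≤ ν := by
          have := Finset.sum_le_sum_of_subset (Finset.subset_univ T) (f := f)
          omega
        have h2 : k * t ≤ ∑ c' ∈ T, f c' := by
          have := Finset.card_nsmul_le_sum T f k
            (fun c' hc' => (Finset.mem_filter.mp hc').2)
          rw [smul_eq_mul, ← ht, mul_comm] at this
          exact this
        have h3 : k * t = ν := by rw [htq', hq]
        omega
      have hfc0 : f c = 0 := by
        have hcmem : c ∈ Finset.univ.filter (fun c => ¬ k ≤ f c) :=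
          Finset.mem_filter.mpr ⟨Finset.mem_univ c, hbig⟩
        exact Finset.sum_eq_zero_iff.mp hzero c hcmem
      -- then the component is a single vertex, but it has no isolated vertices
      have hcard1 : (suppF H c).card ≤ 1 := by
        have h1 := hnear c
        have h2 : f c = matNum (H.induce c.supp) := rfl
        omega
      obtain ⟨v, hv⟩ := c.exists_rep
      have hvsupp : v ∈ suppF H c := mem_suppF.mpr hv
      obtain ⟨u, hu⟩ := hisoH v
      have husupp : u ∈ suppF H c := by
        rw [mem_suppF, SimpleGraph.ConnectedComponent.mem_supp_iff]
        rw [← hv]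
        exact SimpleGraph.ConnectedComponent.connectedComponentMk_eq_of_adj hu.symm
      have hpair : ({v, u} : Finset V) ⊆ suppF H c := by
        intro z hz
        rw [Finset.mem_insert, Finset.mem_singleton] at hz
        rcases hz with rfl | rfl
        · exact hvsupp
        · exact husupp
      have : ({v, u} : Finset V).card = 2 := by
        rw [Finset.card_insert_of_notMem (by simp [hu.ne]), Finset.card_singleton]
      have := Finset.card_le_card hpair
      omega
  rw [hf] at hclaim
  rw [hHG] at hclaim
  exact hclaim

end Final

/-- If `Δ, ν ≥ 2`, `⌈Δ/2⌉ ∣ ν`, and `G` is a graph with no isolated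
vertices, `Δ(G) ≤ Δ`, `ν(G) ≤ ν`, and exactly `Δν + (ν/⌈Δ/2⌉)⌊Δ/2⌋` edges, then every
connected component `C` of `G` has matching number `⌈Δ/2⌉`. -/
theorem extremal_component_matNum_of_dvd (Δ ν : ℕ) (hΔ : 2 ≤ Δ) (hν : 2 ≤ ν)
    (hdvd : (Δ + 1) / 2 ∣ ν)
    {V : Type*} [Fintype V] (G : SimpleGraph V)
    (hiso : ∀ v, ∃ u, G.Adj v u)
    (hdeg : maxDeg G ≤ Δ) (hmat : matNum G ≤ ν)
    (hE : edgeCount G = Δ * ν + (ν / ((Δ + 1) / 2)) * (Δ / 2)) :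
    ∀ c : G.ConnectedComponent, matNum (G.induce c.supp) = (Δ + 1) / 2 := by
  exact extremal_component_matNum_of_dvd' Δ ν hΔ hν hdvd G hiso hdeg hmat hE
end
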